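/- arXiv:2209.11989 — 12 statements merged into one kernel-verified Lean document; each statement's English description precedes it below -/
import Mathlib

section
/- Let H be a real Hilbert space, L > 0, and let A : H → H be L-Lipschitz continuous. Let μ ∈ (0,1), λ₁ > 0, let (pₙ)ₙ≥₁ be nonnegative reals with P := ∑_{n=1}^∞ pₙ < ∞, let (μₙ)ₙ≥₁ be nonnegative reals, and let (wₙ), (yₙ) be arbitrary sequences in H. Define λₙ₊₁ := min{(μ + μₙ)‖wₙ − yₙ‖ / ‖Awₙ − Ayₙ‖, λₙ + pₙ} if Awₙ ≠ Ayₙ, and λₙ₊₁ := λₙ + pₙ otherwise. Then min{μ/L, λ₁} ≤ λₙ ≤ λ₁ + P for every n ≥ 1, and the sequence (λₙ) converges to some λ ∈ [min{μ/L, λ₁}, λ₁ + P]. -/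
open Filter
open scoped Topology RealInnerProductSpace Classical

/-- Lemma 3.1: the self-adaptive step sizes of Algorithm 3.1 are bounded
between `min (μ/L) λ₁` and `λ₁ + P`, and converge to some limit in that interval. -/
theorem stmt_0
    {H : Type*} [NormedAddCommGroup H] [InnerProductSpace ℝ H] [CompleteSpace H]
    (L : ℝ) (hL : 0 < L) (A : H → H)
    (hALip : ∀ x y : H, ‖A x - A y‖ ≤ L * ‖x - y‖)
    (μ : ℝ) (hμ : μ ∈ Set.Ioo (0 : ℝ) 1)
    (p μ' lam : ℕ → ℝ) (w y : ℕ → H)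
    (hp : ∀ n, 1 ≤ n → 0 ≤ p n)
    (hpsum : Summable (fun n => p (n + 1)))
    (P : ℝ) (hP : P = ∑' n : ℕ, p (n + 1))
    (hμ' : ∀ n, 1 ≤ n → 0 ≤ μ' n)
    (hlam1 : 0 < lam 1)
    (hstep : ∀ n, 1 ≤ n → lam (n + 1) =
      if A (w n) = A (y n) then lam n + p n
      else min ((μ + μ' n) * ‖w n - y n‖ / ‖A (w n) - A (y n)‖) (lam n + p n)) :
    (∀ n, 1 ≤ n → min (μ / L) (lam 1) ≤ lam n ∧ lam n ≤ lam 1 + P) ∧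
    ∃ l ∈ Set.Icc (min (μ / L) (lam 1)) (lam 1 + P),
      Tendsto lam atTop (𝓝 l) := by
  obtain ⟨hμ0, hμ1⟩ := hμ
  set m : ℝ := min (μ / L) (lam 1) with hm
  set S : ℕ → ℝ := fun n => ∑ k ∈ Finset.range n, p (k + 1) with hS
  have hpnn : ∀ k : ℕ, 0 ≤ p (k + 1) := fun k => hp (k + 1) (Nat.le_add_left 1 k)
  have hSle : ∀ n, S n ≤ P := by
    intro n
    rw [hP]
    exact Summable.sum_le_tsum (Finset.range n) (fun k _ => hpnn k) hpsum
  have hPnn : 0 ≤ P := by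
    rw [hP]; exact tsum_nonneg hpnn
  -- key: the quotient bound
  have hquot : ∀ n, 1 ≤ n → A (w n) ≠ A (y n) →
      μ / L ≤ (μ + μ' n) * ‖w n - y n‖ / ‖A (w n) - A (y n)‖ := by
    intro n hn hne
    have hApos : 0 < ‖A (w n) - A (y n)‖ := by
      rw [norm_pos_iff, sub_ne_zero]; exact hne
    rw [div_le_div_iff₀ hL hApos]
    calc μ * ‖A (w n) - A (y n)‖ ≤ μ * (L * ‖w n - y n‖) := by
          exact mul_le_mul_of_nonneg_left (hALip _ _) hμ0.le
      _ = μ * ‖w n - y n‖ * L := by ring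
      _ ≤ (μ + μ' n) * ‖w n - y n‖ * L := by
          have := hμ' n hn
          exact mul_le_mul_of_nonneg_right
            (mul_le_mul_of_nonneg_right (by linarith) (norm_nonneg _)) hL.le
  -- step inequalities for f n := lam (n+1)
  have hlow : ∀ n, 1 ≤ n → m ≤ lam n → m ≤ lam (n + 1) := by
    intro n hn h
    rw [hstep n hn]
    split_ifs with hc
    · linarith [hp n hn]
    · refine le_min ?_ (by linarith [hp n hn])
      exact le_trans (min_le_left _ _) (hquot n hn hc)
  have hup : ∀ n, 1 ≤ n → lam (n + 1) ≤ lam n + p n := by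
    intro n hn
    rw [hstep n hn]
    split_ifs with hc
    · exact le_rfl
    · exact min_le_right _ _
  -- bounds for f n = lam (n+1)
  have hbound : ∀ n : ℕ, m ≤ lam (n + 1) ∧ lam (n + 1) ≤ lam 1 + S n := by
    intro n
    induction n with
    | zero => exact ⟨min_le_right _ _, by simp [hS]⟩
    | succ k ih =>
      constructor
      · exact hlow (k + 1) (Nat.le_add_left 1 k) ih.1
      · have := hup (k + 1) (Nat.le_add_left 1 k)
        have hSs : S (k + 1) = S k + p (k + 1) := by
          simp [hS, Finset.sum_range_succ]
        linarith [ih.2]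
  have hbound' : ∀ n, 1 ≤ n → m ≤ lam n ∧ lam n ≤ lam 1 + P := by
    intro n hn
    obtain ⟨k, rfl⟩ := Nat.exists_eq_add_of_le hn
    rw [add_comm]
    exact ⟨(hbound k).1, le_trans (hbound k).2 (by linarith [hSle k])⟩
  refine ⟨hbound', ?_⟩
  -- convergence: c n := lam (n+1) - S n is antitone and bounded below
  set c : ℕ → ℝ := fun n => lam (n + 1) - S n with hc
  have hanti : Antitone c := by
    apply antitone_nat_of_succ_le
    intro n
    have := hup (n + 1) (Nat.le_add_left 1 n)
    have hSs : S (n + 1) = S n + p (n + 1) := by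
      simp [hS, Finset.sum_range_succ]
    simp only [hc]
    linarith
  have hbdd : BddBelow (Set.range c) := by
    refine ⟨m - P, ?_⟩
    rintro x ⟨n, rfl⟩
    have := (hbound n).1
    have := hSle n
    simp only [hc]
    linarith
  have hctend : Tendsto c atTop (𝓝 (⨅ n, c n)) :=
    tendsto_atTop_ciInf hanti hbdd
  have hStend : Tendsto S atTop (𝓝 P) := by
    rw [hP]; exact hpsum.hasSum.tendsto_sum_nat
  have hftend : Tendsto (fun n => lam (n + 1)) atTop (𝓝 ((⨅ n, c n) + P)) := by
    have := hctend.add hStend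
    convert this using 2 with n
    simp [hc]
  have hltend : Tendsto lam atTop (𝓝 ((⨅ n, c n) + P)) :=
    (tendsto_add_atTop_iff_nat 1).mp hftend
  refine ⟨_, ⟨?_, ?_⟩, hltend⟩
  · exact ge_of_tendsto hftend (Eventually.of_forall fun n => (hbound n).1)
  · exact le_of_tendsto hftend (Eventually.of_forall fun n =>
      le_trans (hbound n).2 (by linarith [hSle n]))
end

section
/- Let H be a real Hilbert space, A : H → H monotone, and B : H → 2^H a monotone set-valued map. Let λ, λ' > 0, c ≥ 0, and let w, y ∈ H satisfy (1/λ)(w − y − λAw) ∈ By and λ'‖Aw − Ay‖ ≤ c‖w − y‖ (as is guaranteed, with c = μ + μₙ, by the step-size rule of Algorithm 3.1). Then for every p ∈ H with −Ap ∈ Bp, ‖y − λ(Ay − Aw) − p‖² ≤ ‖w − p‖² − (1 − c²λ²/λ'²)‖w − y‖². -/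
open scoped RealInnerProductSpace

/-- Lemma 3.2(i): the fundamental one-step estimate for the Tseng point. -/
theorem stmt_1
    {H : Type*} [NormedAddCommGroup H] [InnerProductSpace ℝ H] [CompleteSpace H]
    (A : H → H) (B : H → Set H)
    (hAmono : ∀ x y : H, 0 ≤ ⟪A x - A y, x - y⟫)
    (hBmono : ∀ x y u v : H, u ∈ B x → v ∈ B y → 0 ≤ ⟪u - v, x - y⟫)
    (lam lam' c : ℝ) (hlam : 0 < lam) (hlam' : 0 < lam') (hc : 0 ≤ c)
    (w y : H)
    (hres : (1 / lam) • (w - y - lam • A w) ∈ B y)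
    (hstepsize : lam' * ‖A w - A y‖ ≤ c * ‖w - y‖) :
    ∀ p : H, -A p ∈ B p →
      ‖y - lam • (A y - A w) - p‖ ^ 2 ≤
        ‖w - p‖ ^ 2 - (1 - c ^ 2 * lam ^ 2 / lam' ^ 2) * ‖w - y‖ ^ 2 := by
  intro p hp
  have hB := hBmono y p _ (-A p) hres hp
  have hA := hAmono y p
  -- rewrite hB
  have hB' : 0 ≤ (1 / lam) * ⟪w - y - lam • A w, y - p⟫ + ⟪A p, y - p⟫ := by
    have : (1 / lam) • (w - y - lam • A w) - -A p
        = (1 / lam) • (w - y - lam • A w) + A p := by abel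
    rw [this, inner_add_left, real_inner_smul_left] at hB
    linarith
  have key : 0 ≤ ⟪w - y, y - p⟫ + lam * ⟪A y - A w, y - p⟫ := by
    have h1 : 0 ≤ lam * ((1 / lam) * ⟪w - y - lam • A w, y - p⟫ + ⟪A p, y - p⟫) :=
      mul_nonneg hlam.le hB'
    have h2 : 0 ≤ lam * ⟪A y - A p, y - p⟫ := mul_nonneg hlam.le hA
    have e1 : ⟪w - y - lam • A w, y - p⟫ = ⟪w - y, y - p⟫ - lam * ⟪A w, y - p⟫ := by
      rw [inner_sub_left, real_inner_smul_left]
    have e2 : ⟪A y - A p, y - p⟫ = ⟪A y, y - p⟫ - ⟪A p, y - p⟫ := inner_sub_left _ _ _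
    have e3 : ⟪A y - A w, y - p⟫ = ⟪A y, y - p⟫ - ⟪A w, y - p⟫ := inner_sub_left _ _ _
    rw [e1] at h1; rw [e2, mul_sub] at h2
    have hl : lam * (1 / lam) = 1 := mul_one_div_cancel hlam.ne'
    rw [mul_add, ← mul_assoc, hl, one_mul] at h1
    have e4 : lam * ⟪A y - A w, y - p⟫
        = lam * ⟪A y, y - p⟫ - lam * ⟪A w, y - p⟫ := by rw [e3]; ring
    linarith
  have en1 : ‖y - lam • (A y - A w) - p‖ ^ 2 =
      ‖y - p‖ ^ 2 - 2 * (lam * ⟪A y - A w, y - p⟫) + lam ^ 2 * ‖A y - A w‖ ^ 2 := by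
    have hz : y - lam • (A y - A w) - p = (y - p) - lam • (A y - A w) := by abel
    rw [hz, @norm_sub_sq_real, real_inner_smul_right, norm_smul, real_inner_comm]
    simp [mul_pow, sq_abs]
  have en2 : ‖w - p‖ ^ 2 = ‖w - y‖ ^ 2 + 2 * ⟪w - y, y - p⟫ + ‖y - p‖ ^ 2 := by
    have hz : w - p = (w - y) + (y - p) := by abel
    rw [hz, @norm_add_sq_real]
  have hstep2 : lam ^ 2 * ‖A y - A w‖ ^ 2 ≤ c ^ 2 * lam ^ 2 / lam' ^ 2 * ‖w - y‖ ^ 2 := by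
    have hn : ‖A w - A y‖ = ‖A y - A w‖ := norm_sub_rev _ _
    rw [hn] at hstepsize
    have hsq : (lam' * ‖A y - A w‖) ^ 2 ≤ (c * ‖w - y‖) ^ 2 := by
      apply sq_le_sq' _ hstepsize
      have : 0 ≤ lam' * ‖A y - A w‖ := mul_nonneg hlam'.le (norm_nonneg _)
      nlinarith [mul_nonneg hc (norm_nonneg (w - y))]
    rw [div_mul_eq_mul_div, le_div_iff₀ (by positivity)]
    nlinarith [hsq, sq_nonneg lam, sq_nonneg ‖w - y‖]
  linarith [en1, en2, key, hstep2]
end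

section
/- Let H be a real Hilbert space, A : H → H monotone, and B : H → 2^H an r-strongly monotone set-valued map with r > 0. Let λ, λ' > 0, c ≥ 0, and let w, y ∈ H satisfy (1/λ)(w − y − λAw) ∈ By and λ'‖Aw − Ay‖ ≤ c‖w − y‖. Then for every p ∈ H with −Ap ∈ Bp, ‖y − λ(Ay − Aw) − p‖² ≤ ‖w − p‖² − (1 − c²λ²/λ'²)‖w − y‖² − 2rλ‖y − p‖². -/
open scoped RealInnerProductSpace

/-- Lemma 3.2(ii), Case I: the one-step estimate when `B` is `r`-strongly monotone. -/
theorem stmt_2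
    {H : Type*} [NormedAddCommGroup H] [InnerProductSpace ℝ H] [CompleteSpace H]
    (A : H → H) (B : H → Set H) (r : ℝ) (hr : 0 < r)
    (hAmono : ∀ x y : H, 0 ≤ ⟪A x - A y, x - y⟫)
    (hBstrong : ∀ x y u v : H, u ∈ B x → v ∈ B y → r * ‖x - y‖ ^ 2 ≤ ⟪u - v, x - y⟫)
    (lam lam' c : ℝ) (hlam : 0 < lam) (hlam' : 0 < lam') (hc : 0 ≤ c)
    (w y : H)
    (hres : (1 / lam) • (w - y - lam • A w) ∈ B y)
    (hstepsize : lam' * ‖A w - A y‖ ≤ c * ‖w - y‖) :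
    ∀ p : H, -A p ∈ B p →
      ‖y - lam • (A y - A w) - p‖ ^ 2 ≤
        ‖w - p‖ ^ 2 - (1 - c ^ 2 * lam ^ 2 / lam' ^ 2) * ‖w - y‖ ^ 2
          - 2 * r * lam * ‖y - p‖ ^ 2 := by
  intro p hp
  have hmono := hAmono y p
  have hB := hBstrong y p _ _ hres hp
  have expand : ⟪(1 / lam) • (w - y - lam • A w) - -A p, y - p⟫
      = (1 / lam) * ⟪w - y, y - p⟫ - ⟪A w, y - p⟫ + ⟪A p, y - p⟫ := by
    have h1 : (1 / lam) • (w - y - lam • A w) - -A p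
        = (1 / lam) • (w - y) - A w + A p := by
      rw [smul_sub, smul_smul]
      field_simp
      simp only [one_smul, sub_neg_eq_add]
    rw [h1, inner_add_left, inner_sub_left, real_inner_smul_left]
  rw [expand] at hB
  have key : lam * (r * ‖y - p‖ ^ 2)
      ≤ ⟪w - y, y - p⟫ - lam * ⟪A w, y - p⟫ + lam * ⟪A p, y - p⟫ := by
    have := mul_le_mul_of_nonneg_left hB hlam.le
    calc lam * (r * ‖y - p‖ ^ 2) ≤ lam * ((1 / lam) * ⟪w - y, y - p⟫ - ⟪A w, y - p⟫ + ⟪A p, y - p⟫) := this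
      _ = ⟪w - y, y - p⟫ - lam * ⟪A w, y - p⟫ + lam * ⟪A p, y - p⟫ := by
          field_simp
  have hmono' : (0:ℝ) ≤ ⟪A y, y - p⟫ - ⟪A p, y - p⟫ := by
    have : ⟪A y - A p, y - p⟫ = ⟪A y, y - p⟫ - ⟪A p, y - p⟫ := inner_sub_left _ _ _
    linarith [hmono, this ▸ hmono]
  have e1 : ‖w - p‖ ^ 2 = ‖w - y‖ ^ 2 + 2 * ⟪w - y, y - p⟫ + ‖y - p‖ ^ 2 := by
    have hw : w - p = (w - y) + (y - p) := by abel
    rw [hw, norm_add_sq_real]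
  have e2 : ‖y - lam • (A y - A w) - p‖ ^ 2
      = ‖y - p‖ ^ 2 + 2 * (lam * (⟪A w, y - p⟫ - ⟪A y, y - p⟫))
        + lam ^ 2 * ‖A w - A y‖ ^ 2 := by
    have hz : y - lam • (A y - A w) - p = (y - p) + lam • (A w - A y) := by
      rw [smul_sub, smul_sub]; abel
    rw [hz, norm_add_sq_real, real_inner_smul_right, inner_sub_right,
      norm_smul, mul_pow, Real.norm_eq_abs, sq_abs,
      real_inner_comm (y - p) (A w), real_inner_comm (y - p) (A y)]
  have hsq : lam' ^ 2 * ‖A w - A y‖ ^ 2 ≤ c ^ 2 * ‖w - y‖ ^ 2 := by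
    nlinarith [norm_nonneg (A w - A y), norm_nonneg (w - y), hstepsize,
      mul_nonneg hlam'.le (norm_nonneg (A w - A y))]
  have hdiv : lam ^ 2 * ‖A w - A y‖ ^ 2 ≤ c ^ 2 * lam ^ 2 / lam' ^ 2 * ‖w - y‖ ^ 2 := by
    rw [div_mul_eq_mul_div, le_div_iff₀ (by positivity)]
    nlinarith [hsq, sq_nonneg lam]
  rw [e2, e1]
  nlinarith [key, hmono', hdiv]
end

section
/- Let H be a real Hilbert space, A : H → H r-strongly monotone with r > 0, and B : H → 2^H a monotone set-valued map. Let λ, λ' > 0, c ≥ 0, and let w, y ∈ H satisfy (1/λ)(w − y − λAw) ∈ By and λ'‖Aw − Ay‖ ≤ c‖w − y‖. Then for every p ∈ H with −Ap ∈ Bp, ‖y − λ(Ay − Aw) − p‖² ≤ ‖w − p‖² − (1 − c²λ²/λ'²)‖w − y‖² − 2rλ‖y − p‖². -/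
open scoped RealInnerProductSpace

/-- Lemma 3.2(ii), Case II: the one-step estimate when `A` is `r`-strongly monotone. -/
theorem stmt_3
    {H : Type*} [NormedAddCommGroup H] [InnerProductSpace ℝ H] [CompleteSpace H]
    (A : H → H) (B : H → Set H) (r : ℝ) (hr : 0 < r)
    (hAstrong : ∀ x y : H, r * ‖x - y‖ ^ 2 ≤ ⟪A x - A y, x - y⟫)
    (hBmono : ∀ x y u v : H, u ∈ B x → v ∈ B y → 0 ≤ ⟪u - v, x - y⟫)
    (lam lam' c : ℝ) (hlam : 0 < lam) (hlam' : 0 < lam') (hc : 0 ≤ c)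
    (w y : H)
    (hres : (1 / lam) • (w - y - lam • A w) ∈ B y)
    (hstepsize : lam' * ‖A w - A y‖ ≤ c * ‖w - y‖) :
    ∀ p : H, -A p ∈ B p →
      ‖y - lam • (A y - A w) - p‖ ^ 2 ≤
        ‖w - p‖ ^ 2 - (1 - c ^ 2 * lam ^ 2 / lam' ^ 2) * ‖w - y‖ ^ 2
          - 2 * r * lam * ‖y - p‖ ^ 2 := by
  intro p hp
  have h1 := hBmono y p _ _ hres hp
  -- turn h1 into an inequality without the 1/lam factor
  have h1' : 0 ≤ ⟪(w - y - lam • A w) - lam • (-A p), y - p⟫ := by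
    have hrw : (w - y - lam • A w) - lam • (-A p)
        = lam • ((1 / lam) • (w - y - lam • A w) - -A p) := by
      rw [smul_sub, smul_smul]
      field_simp
      rw [one_smul]
    rw [hrw, real_inner_smul_left]
    exact mul_nonneg hlam.le h1
  have h2 := hAstrong y p
  -- squared stepsize bound
  have h3 : lam' ^ 2 * ‖A y - A w‖ ^ 2 ≤ c ^ 2 * ‖w - y‖ ^ 2 := by
    rw [norm_sub_rev]
    nlinarith [mul_nonneg hlam'.le (norm_nonneg (A w - A y)),
      mul_self_le_mul_self (mul_nonneg hlam'.le (norm_nonneg (A w - A y))) hstepsize]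
  have h3' : lam ^ 2 * ‖A y - A w‖ ^ 2 ≤ c ^ 2 * lam ^ 2 / lam' ^ 2 * ‖w - y‖ ^ 2 := by
    rw [div_mul_eq_mul_div, le_div_iff₀ (by positivity)]
    nlinarith [sq_nonneg lam]
  -- expand the norms
  have e1 : ‖y - lam • (A y - A w) - p‖ ^ 2
      = ‖y - p‖ ^ 2 - 2 * lam * ⟪A y - A w, y - p⟫ + lam ^ 2 * ‖A y - A w‖ ^ 2 := by
    have : y - lam • (A y - A w) - p = (y - p) - lam • (A y - A w) := by abel
    rw [this, @norm_sub_sq_real, real_inner_smul_right, norm_smul, mul_pow,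
      real_inner_comm]
    simp only [Real.norm_eq_abs, abs_of_pos hlam]
    ring
  have e2 : ‖w - p‖ ^ 2 = ‖w - y‖ ^ 2 + 2 * ⟪w - y, y - p⟫ + ‖y - p‖ ^ 2 := by
    have : w - p = (w - y) + (y - p) := by abel
    rw [this, @norm_add_sq_real]
  rw [e1, e2]
  -- expand inner products in hypotheses
  simp only [inner_sub_left, inner_add_left, inner_neg_left, real_inner_smul_left,
    sub_neg_eq_add] at h1' h2 ⊢
  nlinarith [mul_le_mul_of_nonneg_left h2 (by positivity : (0:ℝ) ≤ 2 * lam)]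
end

section
/- Let H be a real Hilbert space, A : H → H monotone and L-Lipschitz continuous, and B : H → 2^H a monotone set-valued map. Let λ > 0 and w, y ∈ H with (1/λ)(w − y − λAw) ∈ By. Then for all u, v ∈ H with v − Au ∈ Bu, one has ⟨u − y, v⟩ ≥ (1/λ)⟨u − y, w − y⟩ − L‖u − y‖·‖y − w‖. -/
open scoped RealInnerProductSpace

/-- The key estimate (3.7) in the proof of Lemma 3.3. -/
theorem stmt_4
    {H : Type*} [NormedAddCommGroup H] [InnerProductSpace ℝ H] [CompleteSpace H]
    (L : ℝ) (A : H → H) (B : H → Set H)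
    (hAmono : ∀ x y : H, 0 ≤ ⟪A x - A y, x - y⟫)
    (hALip : ∀ x y : H, ‖A x - A y‖ ≤ L * ‖x - y‖)
    (hBmono : ∀ x y u v : H, u ∈ B x → v ∈ B y → 0 ≤ ⟪u - v, x - y⟫)
    (lam : ℝ) (hlam : 0 < lam) (w y : H)
    (hres : (1 / lam) • (w - y - lam • A w) ∈ B y) :
    ∀ u v : H, v - A u ∈ B u →
      (1 / lam) * ⟪u - y, w - y⟫ - L * (‖u - y‖ * ‖y - w‖) ≤ ⟪u - y, v⟫ := by
  intro u v hu
  have hln : lam ≠ 0 := ne_of_gt hlam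
  have h1 := hBmono u y (v - A u) ((1 / lam) • (w - y - lam • A w)) hu hres
  have h2 := hAmono u y
  have h3 : -(L * (‖u - y‖ * ‖y - w‖)) ≤ ⟪A y - A w, u - y⟫ := by
    have habs := abs_real_inner_le_norm (A y - A w) (u - y)
    have hl := hALip y w
    have hna := neg_abs_le ⟪A y - A w, u - y⟫
    nlinarith [norm_nonneg (u - y), norm_nonneg (A y - A w)]
  have e1 : ⟪(v - A u) - (1 / lam) • (w - y - lam • A w), u - y⟫
      = ⟪v, u - y⟫ - ⟪A u, u - y⟫ - (1 / lam) * ⟪w - y, u - y⟫ + ⟪A w, u - y⟫ := by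
    simp only [inner_sub_left, real_inner_smul_left]
    field_simp
    ring
  have e2 : ⟪A u, u - y⟫ - ⟪A w, u - y⟫
      = ⟪A u - A y, u - y⟫ + ⟪A y - A w, u - y⟫ := by
    simp only [inner_sub_left]; ring
  have c1 : ⟪u - y, v⟫ = ⟪v, u - y⟫ := real_inner_comm _ _
  have c2 : ⟪u - y, w - y⟫ = ⟪w - y, u - y⟫ := real_inner_comm _ _
  rw [e1] at h1
  rw [c1, c2]
  linarith
end

section
/- Let H be a real Hilbert space, p, x⁻, x, t ∈ H, θ ∈ (0, 1], α ≥ 0, and 0 ≤ β ≤ 1. Set w := x + α(x − x⁻), z := x + β(x − x⁻), and x⁺ := (1 − θ)z + θt. If ‖t − p‖² ≤ ‖w − p‖², then ‖x⁺ − p‖² ≤ (1 + a)‖x − p‖² − a‖x⁻ − p‖² + b‖x − x⁻‖² − c‖x⁺ − x‖², where a := (1 − θ)β + θα, b := (1 − θ)(1 + β)β + θ(1 + α)α + ((1 − θ)/θ)(β − β²), and c := ((1 − θ)/θ)(1 − β). -/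
open scoped RealInnerProductSpace

section aux
variable {H : Type*} [NormedAddCommGroup H] [InnerProductSpace ℝ H]

lemma expand_sq (a b : H) (c : ℝ) :
    ‖a + c • b‖ ^ 2 = ‖a‖ ^ 2 + 2 * c * ⟪a, b⟫ + c ^ 2 * ‖b‖ ^ 2 := by
  rw [← real_inner_self_eq_norm_sq, ← real_inner_self_eq_norm_sq,
    ← real_inner_self_eq_norm_sq]
  simp only [inner_add_add_self, real_inner_smul_left, real_inner_smul_right,
    real_inner_comm a b]
  ring

lemma sub_sq_expand (a b : H) :
    ‖a - b‖ ^ 2 = ‖a‖ ^ 2 - 2 * ⟪a, b⟫ + ‖b‖ ^ 2 := by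
  have := expand_sq a b (-1)
  simpa [sub_eq_add_neg] using this

end aux

/-- The one-step estimate (3.16) in the proof of Theorem 3.1. -/
theorem stmt_6
    {H : Type*} [NormedAddCommGroup H] [InnerProductSpace ℝ H] [CompleteSpace H]
    (p xm x t : H) (θ α β : ℝ)
    (hθ : θ ∈ Set.Ioc (0 : ℝ) 1) (hα : 0 ≤ α) (hβ0 : 0 ≤ β) (hβ1 : β ≤ 1)
    (w z xp : H)
    (hw : w = x + α • (x - xm)) (hz : z = x + β • (x - xm))
    (hxp : xp = (1 - θ) • z + θ • t)
    (ht : ‖t - p‖ ^ 2 ≤ ‖w - p‖ ^ 2) :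
    ‖xp - p‖ ^ 2 ≤ (1 + ((1 - θ) * β + θ * α)) * ‖x - p‖ ^ 2
      - ((1 - θ) * β + θ * α) * ‖xm - p‖ ^ 2
      + ((1 - θ) * (1 + β) * β + θ * (1 + α) * α + ((1 - θ) / θ) * (β - β ^ 2)) * ‖x - xm‖ ^ 2
      - (((1 - θ) / θ) * (1 - β)) * ‖xp - x‖ ^ 2 := by
  obtain ⟨hθ0, hθ1⟩ := hθ
  have hθne : θ ≠ 0 := ne_of_gt hθ0
  have exm : (x : H) - xm = (x - p) - (xm - p) := by abel
  have hxxm : ‖x - xm‖ ^ 2 = ‖x - p‖ ^ 2 - 2 * ⟪x - p, xm - p⟫ + ‖xm - p‖ ^ 2 := by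
    rw [exm, sub_sq_expand (x - p) (xm - p)]
  have hinner : ⟪x - p, x - xm⟫ = ‖x - p‖ ^ 2 - ⟪x - p, xm - p⟫ := by
    rw [exm, inner_sub_right, real_inner_self_eq_norm_sq]
  -- identity for w
  have hW : ‖w - p‖ ^ 2
      = (1 + α) * ‖x - p‖ ^ 2 - α * ‖xm - p‖ ^ 2 + (1 + α) * α * ‖x - xm‖ ^ 2 := by
    have e1 : w - p = (x - p) + α • (x - xm) := by rw [hw]; abel
    rw [e1, expand_sq, hinner, hxxm]; ring
  -- identity for z
  have hZ : ‖z - p‖ ^ 2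
      = (1 + β) * ‖x - p‖ ^ 2 - β * ‖xm - p‖ ^ 2 + (1 + β) * β * ‖x - xm‖ ^ 2 := by
    have e1 : z - p = (x - p) + β • (x - xm) := by rw [hz]; abel
    rw [e1, expand_sq, hinner, hxxm]; ring
  -- the convexity identity
  have key : ‖xp - p‖ ^ 2
      = (1 - θ) * ‖z - p‖ ^ 2 + θ * ‖t - p‖ ^ 2 - ((1 - θ) / θ) * ‖xp - z‖ ^ 2 := by
    have e1 : xp - p = (z - p) + θ • ((t - p) - (z - p)) := by rw [hxp]; module
    have e2 : xp - z = θ • ((t - p) - (z - p)) := by rw [hxp]; module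
    have e2' : ‖xp - z‖ ^ 2 = θ ^ 2 * ‖(t - p) - (z - p)‖ ^ 2 := by
      rw [e2, norm_smul, mul_pow, Real.norm_eq_abs, sq_abs]
    rw [e1, expand_sq, e2', sub_sq_expand (t - p) (z - p), inner_sub_right,
      real_inner_self_eq_norm_sq, real_inner_comm (t - p) (z - p)]
    field_simp
    ring
  -- lower bound for ‖xp - z‖²
  have hQ : (1 - β) * ‖xp - x‖ ^ 2 + (β ^ 2 - β) * ‖x - xm‖ ^ 2 ≤ ‖xp - z‖ ^ 2 := by
    have e1 : xp - z = (xp - x) + (-β) • (x - xm) := by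
      rw [hz, neg_smul]; abel
    have hs : (0 : ℝ) ≤ ‖xp - x‖ ^ 2 - 2 * ⟪xp - x, x - xm⟫ + ‖x - xm‖ ^ 2 := by
      rw [← sub_sq_expand (xp - x) (x - xm)]; positivity
    rw [e1, expand_sq]
    nlinarith [mul_nonneg hβ0 hs]
  -- assemble
  have hd : (0 : ℝ) ≤ (1 - θ) / θ := div_nonneg (by linarith) hθ0.le
  have f1 : θ * ‖t - p‖ ^ 2 ≤ θ * ‖w - p‖ ^ 2 :=
    mul_le_mul_of_nonneg_left ht hθ0.le
  have f2 : ((1 - θ) / θ) * ((1 - β) * ‖xp - x‖ ^ 2 + (β ^ 2 - β) * ‖x - xm‖ ^ 2)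
      ≤ ((1 - θ) / θ) * ‖xp - z‖ ^ 2 := mul_le_mul_of_nonneg_left hQ hd
  have hZ' : (1 - θ) * ‖z - p‖ ^ 2 = (1 - θ) *
      ((1 + β) * ‖x - p‖ ^ 2 - β * ‖xm - p‖ ^ 2 + (1 + β) * β * ‖x - xm‖ ^ 2) := by
    rw [hZ]
  have hW' : θ * ‖w - p‖ ^ 2 = θ *
      ((1 + α) * ‖x - p‖ ^ 2 - α * ‖xm - p‖ ^ 2 + (1 + α) * α * ‖x - xm‖ ^ 2) := by
    rw [hW]
  linarith [key, f1, f2, hZ', hW']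
end

section
/- Let ε ∈ (1, ∞) and let β, βₙ, βₙ₊₁, αₙ₊₁, θₙ, θₙ₊₁ be real numbers with 0 ≤ βₙ ≤ βₙ₊₁ ≤ β < (3 + 2ε − √(8ε + 17))/(2ε), 0 ≤ αₙ₊₁ ≤ 1, and 0 < θₙ ≤ θₙ₊₁ ≤ 1/(1 + ε). Define bₙ₊₁ := (1 − θₙ₊₁)(1 + βₙ₊₁)βₙ₊₁ + θₙ₊₁(1 + αₙ₊₁)αₙ₊₁ + ((1 − θₙ₊₁)/θₙ₊₁)(βₙ₊₁ − βₙ₊₁²) and cₙ := ((1 − θₙ)/θₙ)(1 − βₙ). Then cₙ − bₙ₊₁ ≥ δ, where δ := (ε²β² − (3ε + 2ε²)β + (ε² + ε − 2))/(1 + ε), and δ > 0. -/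
set_option maxHeartbeats 1000000 in
/-- The algebraic estimate (3.17)–(3.19) in the proof of Theorem 3.1:
under the parameter conditions (C3) the gap `cₙ − bₙ₊₁` is at least `δ > 0`. -/
theorem stmt_7
    (ε β βn βn1 αn1 θn θn1 : ℝ)
    (hε : 1 < ε)
    (hβn0 : 0 ≤ βn) (hβmono : βn ≤ βn1) (hβn1 : βn1 ≤ β)
    (hβ : β < (3 + 2 * ε - Real.sqrt (8 * ε + 17)) / (2 * ε))
    (hαn10 : 0 ≤ αn1) (hαn11 : αn1 ≤ 1)
    (hθn : 0 < θn) (hθmono : θn ≤ θn1) (hθn1 : θn1 ≤ 1 / (1 + ε)) :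
    (ε ^ 2 * β ^ 2 - (3 * ε + 2 * ε ^ 2) * β + (ε ^ 2 + ε - 2)) / (1 + ε) ≤
      ((1 - θn) / θn) * (1 - βn) -
        ((1 - θn1) * (1 + βn1) * βn1 + θn1 * (1 + αn1) * αn1
          + ((1 - θn1) / θn1) * (βn1 - βn1 ^ 2)) ∧
    0 < (ε ^ 2 * β ^ 2 - (3 * ε + 2 * ε ^ 2) * β + (ε ^ 2 + ε - 2)) / (1 + ε) := by
  have hε0 : (0:ℝ) < ε := by linarith
  have h1e : (0:ℝ) < 1 + ε := by linarith
  set s := Real.sqrt (8 * ε + 17) with hs_def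
  have hs0 : 0 ≤ s := Real.sqrt_nonneg _
  have hs2 : s ^ 2 = 8 * ε + 17 := Real.sq_sqrt (by linarith)
  have hβ2 : β * (2 * ε) < 3 + 2 * ε - s := (lt_div_iff₀ (by linarith)).mp hβ
  have hs3 : 3 < s := by nlinarith
  have hβ1 : β < 1 := by nlinarith
  have hq : 0 < ε ^ 2 * β ^ 2 - (3 * ε + 2 * ε ^ 2) * β + (ε ^ 2 + ε - 2) := by
    have hA : s < 3 + 2 * ε - 2 * ε * β := by nlinarith
    nlinarith [mul_pos (show (0:ℝ) < 3 + 2 * ε - 2 * ε * β - s by linarith)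
      (show (0:ℝ) < 3 + 2 * ε - 2 * ε * β + s by linarith)]
  have hθn1pos : 0 < θn1 := lt_of_lt_of_le hθn hθmono
  have hθn1T : θn1 * (1 + ε) ≤ 1 := by
    have := (le_div_iff₀ h1e).mp hθn1
    linarith
  have hθ1lt : θn1 < 1 := by nlinarith
  have hb0 : 0 ≤ βn1 := le_trans hβn0 hβmono
  have hb1 : βn1 < 1 := lt_of_le_of_lt hβn1 hβ1
  -- Step 1: monotonicity reduction from (θn, βn) to (θn1, βn1)
  have hdivmono : (1 - θn1) / θn1 ≤ (1 - θn) / θn := by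
    rw [div_le_div_iff₀ hθn1pos hθn]
    nlinarith
  have hdivnn : 0 ≤ (1 - θn1) / θn1 :=
    div_nonneg (by linarith) (le_of_lt hθn1pos)
  have key1 : ((1 - θn1) / θn1) * (1 - βn1) ≤ ((1 - θn) / θn) * (1 - βn) :=
    mul_le_mul hdivmono (by linarith) (by linarith) (le_trans hdivnn hdivmono)
  -- Step 4: the quadratic comparison
  have h4 : ε ^ 2 * β ^ 2 - (3 * ε + 2 * ε ^ 2) * β + (ε ^ 2 + ε - 2) ≤
      ε * (1 + ε) * (1 - βn1) ^ 2 - ε * ((1 + βn1) * βn1) - 2 := by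
    nlinarith [mul_nonneg (sub_nonneg.mpr hβn1)
      (show 0 ≤ 3 * ε + 2 * ε ^ 2 - ε ^ 2 * (βn1 + β) by nlinarith)]
  -- Main polynomial estimate after clearing denominators
  have hP : (ε ^ 2 * β ^ 2 - (3 * ε + 2 * ε ^ 2) * β + (ε ^ 2 + ε - 2)) * θn1 ≤
      ((1 - θn1) * (1 - βn1) ^ 2 - θn1 * ((1 - θn1) * (1 + βn1) * βn1
        + θn1 * (1 + αn1) * αn1)) * (1 + ε) := by
    have H1 : 0 ≤ θn1 * ((ε * (1 + ε) * (1 - βn1) ^ 2 - ε * ((1 + βn1) * βn1) - 2)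
        - (ε ^ 2 * β ^ 2 - (3 * ε + 2 * ε ^ 2) * β + (ε ^ 2 + ε - 2))) :=
      mul_nonneg (le_of_lt hθn1pos) (by linarith)
    have H2 : 0 ≤ (1 - θn1 * (1 + ε)) * (1 - βn1) ^ 2 * (1 + ε) :=
      mul_nonneg (mul_nonneg (by linarith) (sq_nonneg _)) (le_of_lt h1e)
    have H3 : 0 ≤ θn1 * (1 - θn1 * (1 + ε)) * (2 - (1 + βn1) * βn1) :=
      mul_nonneg (mul_nonneg (le_of_lt hθn1pos) (by linarith))
        (by nlinarith [mul_nonneg (by linarith : (0:ℝ) ≤ 1 - βn1) (by linarith : (0:ℝ) ≤ 2 + βn1)])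
    have H4 : 0 ≤ θn1 ^ 2 * (2 - (1 + αn1) * αn1) * (1 + ε) :=
      mul_nonneg (mul_nonneg (sq_nonneg _)
        (by nlinarith [mul_nonneg (by linarith : (0:ℝ) ≤ 1 - αn1) (by linarith : (0:ℝ) ≤ 2 + αn1)])) (le_of_lt h1e)
    linarith [H1, H2, H3, H4]
  -- Convert hP into the divided form
  have key2 : (ε ^ 2 * β ^ 2 - (3 * ε + 2 * ε ^ 2) * β + (ε ^ 2 + ε - 2)) / (1 + ε) ≤
      ((1 - θn1) / θn1) * (1 - βn1) -
        ((1 - θn1) * (1 + βn1) * βn1 + θn1 * (1 + αn1) * αn1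
          + ((1 - θn1) / θn1) * (βn1 - βn1 ^ 2)) := by
    rw [div_le_iff₀ h1e]
    have hrw : (((1 - θn1) / θn1) * (1 - βn1) -
        ((1 - θn1) * (1 + βn1) * βn1 + θn1 * (1 + αn1) * αn1
          + ((1 - θn1) / θn1) * (βn1 - βn1 ^ 2))) * (1 + ε)
        = (((1 - θn1) * (1 - βn1) ^ 2 - θn1 * ((1 - θn1) * (1 + βn1) * βn1
          + θn1 * (1 + αn1) * αn1)) * (1 + ε)) / θn1 := by
      field_simp
      ring_nf
    rw [hrw, le_div_iff₀ hθn1pos]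
    linarith [hP]
  constructor
  · linarith [key1, key2]
  · exact div_pos hq h1e
end

section
/- Let (φₙ)ₙ≥₀, (ψₙ)ₙ≥₁, (sₙ)ₙ≥₁ be nonnegative real sequences, let (aₙ)ₙ≥₁ be reals with 0 ≤ aₙ ≤ a < 1 for all n, and let δ > 0. Define Γₙ := φₙ − aₙφₙ₋₁ + ψₙ for n ≥ 1, and suppose Γₙ₊₁ − Γₙ ≤ −δ·sₙ for all n ≥ 1. Then: (i) φₙ ≤ aⁿφ₀ + max{Γ₁, 0}/(1 − a) for all n ≥ 1; (ii) δ·∑_{k=1}^{n} sₖ ≤ φ₀ + max{Γ₁, 0}/(1 − a) for all n ≥ 1; in particular ∑_{k=1}^{∞} sₖ < ∞. -/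
/-- The abstract energy argument (3.19)–(3.24) in the proof of Theorem 3.1. -/
theorem stmt_8
    (φ ψ s aseq : ℕ → ℝ) (a δ : ℝ)
    (hφ : ∀ n, 0 ≤ φ n)
    (hψ : ∀ n, 1 ≤ n → 0 ≤ ψ n)
    (hs : ∀ n, 1 ≤ n → 0 ≤ s n)
    (ha : ∀ n, 1 ≤ n → 0 ≤ aseq n ∧ aseq n ≤ a)
    (ha1 : a < 1)
    (hδ : 0 < δ)
    (Γ : ℕ → ℝ)
    (hΓ : ∀ n, 1 ≤ n → Γ n = φ n - aseq n * φ (n - 1) + ψ n)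
    (hdec : ∀ n, 1 ≤ n → Γ (n + 1) - Γ n ≤ -(δ * s n)) :
    (∀ n, 1 ≤ n → φ n ≤ a ^ n * φ 0 + max (Γ 1) 0 / (1 - a)) ∧
    (∀ n, 1 ≤ n → δ * ∑ k ∈ Finset.Icc 1 n, s k ≤ φ 0 + max (Γ 1) 0 / (1 - a)) ∧
    Summable (fun n => s (n + 1)) := by
  set M : ℝ := max (Γ 1) 0 with hM
  have hM0 : 0 ≤ M := le_max_right _ _
  have ha0 : 0 ≤ a := le_trans (ha 1 le_rfl).1 (ha 1 le_rfl).2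
  have h1a : 0 < 1 - a := by linarith
  set C : ℝ := M / (1 - a) with hC
  have hC0 : 0 ≤ C := div_nonneg hM0 h1a.le
  have hMC : M + a * C = C := by
    have : C * (1 - a) = M := div_mul_cancel₀ _ h1a.ne'
    nlinarith
  -- Γ is ≤ Γ 1 on n ≥ 1
  have hΓ1 : ∀ n, 1 ≤ n → Γ n ≤ Γ 1 := by
    intro n hn
    induction n, hn using Nat.le_induction with
    | base => exact le_rfl
    | succ n hn ih =>
      have := hdec n hn
      have hsn := hs n hn
      nlinarith
  -- main pointwise bound, by induction from 0
  have hphi : ∀ n, φ n ≤ a ^ n * φ 0 + C := by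
    intro n
    induction n with
    | zero => simpa using by linarith [hC0]
    | succ n ih =>
      have h1 : Γ (n + 1) ≤ M := le_trans (hΓ1 (n + 1) (Nat.le_add_left 1 n)) (le_max_left _ _)
      have h2 := hΓ (n + 1) (Nat.le_add_left 1 n)
      simp only [Nat.add_sub_cancel] at h2
      have hψn := hψ (n + 1) (Nat.le_add_left 1 n)
      have han := ha (n + 1) (Nat.le_add_left 1 n)
      have h3 : aseq (n + 1) * φ n ≤ a * φ n :=
        mul_le_mul_of_nonneg_right han.2 (hφ n)
      have h4 : a * φ n ≤ a * (a ^ n * φ 0) + a * C := by nlinarith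
      have : φ (n + 1) ≤ a * (a ^ n * φ 0) + (M + a * C) := by nlinarith
      rw [hMC] at this
      calc φ (n + 1) ≤ a * (a ^ n * φ 0) + C := this
        _ = a ^ (n + 1) * φ 0 + C := by ring
  -- telescoping
  have htel : ∀ n, 1 ≤ n → δ * ∑ k ∈ Finset.Icc 1 n, s k ≤ Γ 1 - Γ (n + 1) := by
    intro n hn
    induction n, hn using Nat.le_induction with
    | base =>
      simp only [Finset.Icc_self, Finset.sum_singleton]
      linarith [hdec 1 le_rfl]
    | succ n hn ih =>
      rw [Finset.sum_Icc_succ_top (by omega : 1 ≤ n + 1)]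
      have := hdec (n + 1) (Nat.le_add_left 1 n)
      nlinarith
  have hsum : ∀ n, 1 ≤ n → δ * ∑ k ∈ Finset.Icc 1 n, s k ≤ φ 0 + C := by
    intro n hn
    have h1 := htel n hn
    have h2 := hΓ (n + 1) (Nat.le_add_left 1 n)
    simp only [Nat.add_sub_cancel] at h2
    have hψn := hψ (n + 1) (Nat.le_add_left 1 n)
    have han := ha (n + 1) (Nat.le_add_left 1 n)
    have h3 : aseq (n + 1) * φ n ≤ a * φ n :=
      mul_le_mul_of_nonneg_right han.2 (hφ n)
    have h4 : Γ (n + 1) ≥ -(a * φ n) := by nlinarith [hφ (n + 1)]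
    have h5 : a * φ n ≤ a * (a ^ n * φ 0) + a * C := by
      nlinarith [hphi n]
    have h6 : a * (a ^ n * φ 0) ≤ φ 0 := by
      have hp : a ^ (n + 1) ≤ 1 := pow_le_one₀ ha0 ha1.le
      have : a * a ^ n = a ^ (n + 1) := by ring
      nlinarith [hφ 0, pow_nonneg ha0 (n + 1)]
    have hΓ1M : Γ 1 ≤ M := le_max_left _ _
    nlinarith
  refine ⟨fun n hn => hphi n, hsum, ?_⟩
  apply summable_of_sum_range_le (c := (φ 0 + C) / δ)
    (fun n => hs (n + 1) (Nat.le_add_left 1 n))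
  intro n
  have hrw : ∑ i ∈ Finset.range n, s (i + 1) = ∑ k ∈ Finset.Icc 1 n, s k := by
    rw [← Finset.Ico_add_one_right_eq_Icc, Finset.sum_Ico_eq_sum_range]
    simp [add_comm]
  rw [hrw]
  rcases Nat.eq_zero_or_pos n with h | h
  · subst h
    simp only [show Finset.Icc 1 0 = (∅ : Finset ℕ) from rfl, Finset.sum_empty]
    exact div_nonneg (by linarith [hφ 0, hC0]) hδ.le
  · rw [le_div_iff₀ hδ, mul_comm]
    exact hsum n h
end

section
/- Let H be a real Hilbert space, C ⊆ H nonempty, closed and convex, and A : H → H pseudomonotone. Let λ, λ' > 0, c ≥ 0, let w ∈ H, and let y ∈ C satisfy ⟨w − λAw − y, u − y⟩ ≤ 0 for all u ∈ C (i.e. y = P_C(w − λAw)), together with λ'‖Aw − Ay‖ ≤ c‖w − y‖. Then for every p ∈ C with ⟨Ap, u − p⟩ ≥ 0 for all u ∈ C, one has ‖y − λ(Ay − Aw) − p‖² ≤ ‖w − p‖² − (1 − c²λ²/λ'²)‖w − y‖². -/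
open scoped RealInnerProductSpace

/-- Proposition 3.1(i): the one-step estimate for the projected Tseng point
in the variational-inequality case `B = N_C`. -/
theorem stmt_11
    {H : Type*} [NormedAddCommGroup H] [InnerProductSpace ℝ H] [CompleteSpace H]
    (C : Set H) (hCne : C.Nonempty) (hCclosed : IsClosed C) (hCconv : Convex ℝ C)
    (A : H → H)
    (hApseudo : ∀ x y : H, 0 ≤ ⟪A x, y - x⟫ → 0 ≤ ⟪A y, y - x⟫)
    (lam lam' c : ℝ) (hlam : 0 < lam) (hlam' : 0 < lam') (hc : 0 ≤ c)
    (w y : H) (hyC : y ∈ C)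
    (hproj : ∀ u ∈ C, ⟪w - lam • A w - y, u - y⟫ ≤ 0)
    (hstepsize : lam' * ‖A w - A y‖ ≤ c * ‖w - y‖) :
    ∀ p : H, p ∈ C → (∀ u ∈ C, 0 ≤ ⟪A p, u - p⟫) →
      ‖y - lam • (A y - A w) - p‖ ^ 2 ≤
        ‖w - p‖ ^ 2 - (1 - c ^ 2 * lam ^ 2 / lam' ^ 2) * ‖w - y‖ ^ 2 := by
  intro p hpC hpVI
  -- pseudomonotonicity: ⟪A y, y - p⟫ ≥ 0
  have h1 : 0 ≤ ⟪A y, y - p⟫ := hApseudo p y (hpVI y hyC)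
  -- projection inequality at u = p
  have h2 : ⟪w - lam • A w - y, p - y⟫ ≤ 0 := hproj p hpC
  have h2' : ⟪w - y, p - y⟫ ≤ lam * ⟪A w, p - y⟫ := by
    have := h2
    rw [show w - lam • A w - y = (w - y) - lam • A w by abel] at this
    rw [inner_sub_left, real_inner_smul_left] at this
    linarith
  -- stepsize squared
  have h3 : lam' ^ 2 * ‖A w - A y‖ ^ 2 ≤ c ^ 2 * ‖w - y‖ ^ 2 := by
    have hnn : 0 ≤ lam' * ‖A w - A y‖ := by positivity
    nlinarith [hstepsize, hnn]
  have h3' : lam ^ 2 * ‖A y - A w‖ ^ 2 ≤ c ^ 2 * lam ^ 2 / lam' ^ 2 * ‖w - y‖ ^ 2 := by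
    rw [div_mul_eq_mul_div, le_div_iff₀ (by positivity : (0:ℝ) < lam' ^ 2)]
    rw [norm_sub_rev]
    nlinarith [mul_le_mul_of_nonneg_left h3 (sq_nonneg lam)]
  -- expansion of the left-hand side
  have e1 : ‖y - lam • (A y - A w) - p‖ ^ 2 =
      ‖y - p‖ ^ 2 - 2 * (lam * ⟪y - p, A y - A w⟫) + lam ^ 2 * ‖A y - A w‖ ^ 2 := by
    rw [show y - lam • (A y - A w) - p = (y - p) - lam • (A y - A w) by abel]
    rw [@norm_sub_sq_real, real_inner_smul_right, norm_smul, Real.norm_eq_abs,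
      abs_of_pos hlam, mul_pow]
  -- expansion of ‖w - p‖²
  have e2 : ‖w - p‖ ^ 2 = ‖w - y‖ ^ 2 + 2 * ⟪w - y, y - p⟫ + ‖y - p‖ ^ 2 := by
    rw [show w - p = (w - y) + (y - p) by abel, @norm_add_sq_real]
  -- relate inner products
  have e3 : ⟪y - p, A y - A w⟫ = ⟪A y, y - p⟫ - ⟪A w, y - p⟫ := by
    rw [inner_sub_right, real_inner_comm (y - p) (A y), real_inner_comm (y - p) (A w)]
  have e4 : ⟪A w, p - y⟫ = -⟪A w, y - p⟫ := by
    rw [show p - y = -(y - p) by abel, inner_neg_right]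
  have e5 : ⟪w - y, p - y⟫ = -⟪w - y, y - p⟫ := by
    rw [show p - y = -(y - p) by abel, inner_neg_right]
  nlinarith [h1, h2', h3', e1, e2, e3, e4, e5, hlam, mul_nonneg hlam.le h1]
end

section
/- Let H be a real Hilbert space, C ⊆ H nonempty, closed and convex, and A : H → H r-strongly pseudomonotone with r > 0. Let λ, λ' > 0, c ≥ 0, let w ∈ H, and let y ∈ C satisfy ⟨w − λAw − y, u − y⟩ ≤ 0 for all u ∈ C (i.e. y = P_C(w − λAw)), together with λ'‖Aw − Ay‖ ≤ c‖w − y‖. Then for every p ∈ C with ⟨Ap, u − p⟩ ≥ 0 for all u ∈ C, one has ‖y − λ(Ay − Aw) − p‖² ≤ ‖w − p‖² − (1 − c²λ²/λ'²)‖w − y‖² − 2rλ‖y − p‖². -/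
open scoped RealInnerProductSpace

/-- Proposition 3.1(ii): the one-step estimate for the projected Tseng point
when `A` is `r`-strongly pseudomonotone. -/
theorem stmt_12
    {H : Type*} [NormedAddCommGroup H] [InnerProductSpace ℝ H] [CompleteSpace H]
    (C : Set H) (hCne : C.Nonempty) (hCclosed : IsClosed C) (hCconv : Convex ℝ C)
    (A : H → H) (r : ℝ) (hr : 0 < r)
    (hAstrpseudo : ∀ x y : H, 0 ≤ ⟪A y, x - y⟫ → r * ‖x - y‖ ^ 2 ≤ ⟪A x, x - y⟫)
    (lam lam' c : ℝ) (hlam : 0 < lam) (hlam' : 0 < lam') (hc : 0 ≤ c)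
    (w y : H) (hyC : y ∈ C)
    (hproj : ∀ u ∈ C, ⟪w - lam • A w - y, u - y⟫ ≤ 0)
    (hstepsize : lam' * ‖A w - A y‖ ≤ c * ‖w - y‖) :
    ∀ p : H, p ∈ C → (∀ u ∈ C, 0 ≤ ⟪A p, u - p⟫) →
      ‖y - lam • (A y - A w) - p‖ ^ 2 ≤
        ‖w - p‖ ^ 2 - (1 - c ^ 2 * lam ^ 2 / lam' ^ 2) * ‖w - y‖ ^ 2
          - 2 * r * lam * ‖y - p‖ ^ 2 := by
  intro p hpC hpVI
  -- strong pseudomonotonicity at (y, p)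
  have hA : r * ‖y - p‖ ^ 2 ≤ ⟪A y, y - p⟫ := hAstrpseudo y p (hpVI y hyC)
  -- projection inequality with u = p
  have hPraw := hproj p hpC
  have hP : lam * ⟪A w, y - p⟫ ≤ ⟪w - y, y - p⟫ := by
    have h1 : ⟪w - lam • A w - y, p - y⟫
        = ⟪w - y, p - y⟫ - lam * ⟪A w, p - y⟫ := by
      rw [show w - lam • A w - y = (w - y) - lam • A w by abel]
      rw [inner_sub_left, real_inner_smul_left]
    have h2 : ⟪w - y, p - y⟫ = -⟪w - y, y - p⟫ := by
      rw [show p - y = -(y - p) by abel, inner_neg_right]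
    have h3 : ⟪A w, p - y⟫ = -⟪A w, y - p⟫ := by
      rw [show p - y = -(y - p) by abel, inner_neg_right]
    rw [h1, h2, h3] at hPraw
    linarith
  -- stepsize squared
  have hS : lam ^ 2 * ‖A y - A w‖ ^ 2 ≤ c ^ 2 * lam ^ 2 / lam' ^ 2 * ‖w - y‖ ^ 2 := by
    have hn : ‖A y - A w‖ = ‖A w - A y‖ := by rw [norm_sub_rev]
    have h1 : (lam' * ‖A w - A y‖) ^ 2 ≤ (c * ‖w - y‖) ^ 2 := by
      have := mul_nonneg hlam'.le (norm_nonneg (A w - A y))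
      nlinarith [hstepsize]
    rw [hn]
    rw [div_mul_eq_mul_div, le_div_iff₀ (by positivity)]
    nlinarith [sq_nonneg lam]
  -- key identity
  have key : ‖y - lam • (A y - A w) - p‖ ^ 2
      = ‖w - p‖ ^ 2 - ‖w - y‖ ^ 2 - 2 * ⟪w - y, y - p⟫
        - 2 * lam * (⟪A y, y - p⟫ - ⟪A w, y - p⟫) + lam ^ 2 * ‖A y - A w‖ ^ 2 := by
    have e1 : y - lam • (A y - A w) - p = (y - p) - lam • (A y - A w) := by abel
    have e2 : w - p = (w - y) + (y - p) := by abel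
    rw [e1, e2]
    rw [← real_inner_self_eq_norm_sq, ← real_inner_self_eq_norm_sq,
      ← real_inner_self_eq_norm_sq, ← real_inner_self_eq_norm_sq]
    simp only [inner_sub_left, inner_sub_right, inner_add_left, inner_add_right,
      real_inner_smul_left, real_inner_smul_right]
    rw [real_inner_comm p y, real_inner_comm y w, real_inner_comm p w,
      real_inner_comm y (A y), real_inner_comm y (A w), real_inner_comm p (A y),
      real_inner_comm p (A w), real_inner_comm (A w) (A y)]
    ring
  rw [key]
  nlinarith [mul_le_mul_of_nonneg_left hA (by linarith : (0:ℝ) ≤ 2 * lam)]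
end

section
/- Let H be a real Hilbert space, C ⊆ H nonempty, closed and convex, and A : H → H pseudomonotone and L-Lipschitz continuous, satisfying: for any sequence (xₙ) in H with xₙ ⇀ w*, one has ‖Aw*‖ ≤ liminf_{n→∞} ‖Axₙ‖. Let (λₙ) be reals with λₙ ≥ λ̲ for all n and some λ̲ > 0, let (wₙ) be a sequence in H, and for each n let yₙ ∈ C satisfy ⟨wₙ − λₙAwₙ − yₙ, u − yₙ⟩ ≤ 0 for all u ∈ C (i.e. yₙ = P_C(wₙ − λₙAwₙ)). If ‖wₙ − yₙ‖ → 0 and (wₙ) converges weakly to some z ∈ H, then z ∈ C and ⟨Az, u − z⟩ ≥ 0 for all u ∈ C, i.e. z solves VI(A, C). -/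
open Filter
open scoped Topology RealInnerProductSpace

set_option maxHeartbeats 1000000 in
/-- Proposition 3.2: any weak cluster point of the iterates (along which
`‖wₙ − yₙ‖ → 0`) solves the variational inequality `VI(A, C)`. -/
theorem stmt_13
    {H : Type*} [NormedAddCommGroup H] [InnerProductSpace ℝ H] [CompleteSpace H]
    (C : Set H) (hCne : C.Nonempty) (hCclosed : IsClosed C) (hCconv : Convex ℝ C)
    (L : ℝ) (A : H → H)
    (hApseudo : ∀ x y : H, 0 ≤ ⟪A x, y - x⟫ → 0 ≤ ⟪A y, y - x⟫)
    (hALip : ∀ x y : H, ‖A x - A y‖ ≤ L * ‖x - y‖)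
    (hAweak : ∀ (x : ℕ → H) (wstar : H),
      (∀ f : H, Tendsto (fun n => ⟪x n, f⟫) atTop (𝓝 ⟪wstar, f⟫)) →
      ‖A wstar‖ ≤ liminf (fun n => ‖A (x n)‖) atTop)
    (lam : ℕ → ℝ) (lamlb : ℝ) (hlamlb : 0 < lamlb) (hlam : ∀ n, lamlb ≤ lam n)
    (w y : ℕ → H)
    (hyC : ∀ n, y n ∈ C)
    (hproj : ∀ n, ∀ u ∈ C, ⟪w n - lam n • A (w n) - y n, u - y n⟫ ≤ 0)
    (z : H)
    (hwy : Tendsto (fun n => ‖w n - y n‖) atTop (𝓝 0))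
    (hweak : ∀ f : H, Tendsto (fun n => ⟪w n, f⟫) atTop (𝓝 ⟪z, f⟫)) :
    z ∈ C ∧ ∀ u ∈ C, 0 ≤ ⟪A z, u - z⟫ := by
  -- Lipschitz with |L|
  have hALip' : ∀ x y : H, ‖A x - A y‖ ≤ |L| * ‖x - y‖ := fun x y =>
    (hALip x y).trans (mul_le_mul_of_nonneg_right (le_abs_self L) (norm_nonneg _))
  -- boundedness of w via Banach–Steinhaus
  obtain ⟨B, hB⟩ : ∃ B : ℝ, ∀ n, ‖w n‖ ≤ B := by
    have key : ∀ f : H, ∃ c, ∀ n, ‖(InnerProductSpace.toDual ℝ H (w n) : H →L[ℝ] ℝ) f‖ ≤ c := by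
      intro f
      obtain ⟨c, hc⟩ := ((hweak f).norm).bddAbove_range
      exact ⟨c, fun n => by simpa [InnerProductSpace.toDual_apply_apply] using hc ⟨n, rfl⟩⟩
    obtain ⟨B, hB⟩ := banach_steinhaus key
    exact ⟨B, fun n => by simpa using hB n⟩
  have hBnn : 0 ≤ B := le_trans (norm_nonneg _) (hB 0)
  -- bound on ‖w n - y n‖
  obtain ⟨D, hD⟩ : ∃ D : ℝ, ∀ n, ‖w n - y n‖ ≤ D := by
    obtain ⟨c, hc⟩ := hwy.bddAbove_range
    exact ⟨c, fun n => hc ⟨n, rfl⟩⟩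
  have hDnn : 0 ≤ D := le_trans (norm_nonneg _) (hD 0)
  -- bound on ‖A (w n)‖
  set M : ℝ := ‖A z‖ + |L| * (B + ‖z‖) with hM
  have hAwb : ∀ n, ‖A (w n)‖ ≤ M := by
    intro n
    have h1 : ‖A (w n) - A z‖ ≤ |L| * ‖w n - z‖ := hALip' _ _
    have h2 : ‖w n - z‖ ≤ B + ‖z‖ := (norm_sub_le _ _).trans (by gcongr; exact hB n)
    calc ‖A (w n)‖ ≤ ‖A (w n) - A z‖ + ‖A z‖ := by
          simpa using norm_add_le (A (w n) - A z) (A z)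
      _ ≤ |L| * (B + ‖z‖) + ‖A z‖ := by
          gcongr
          exact h1.trans (by gcongr)
      _ = M := by ring
  have hMnn : 0 ≤ M := le_trans (norm_nonneg _) (hAwb 0)
  -- weak convergence of y to z
  have hyweak : ∀ f : H, Tendsto (fun n => ⟪y n, f⟫) atTop (𝓝 ⟪z, f⟫) := by
    intro f
    have h0 : Tendsto (fun n => (⟪y n - w n, f⟫ : ℝ)) atTop (𝓝 0) := by
      apply squeeze_zero_norm (a := fun n => ‖w n - y n‖ * ‖f‖)
      · intro n
        calc ‖(⟪y n - w n, f⟫ : ℝ)‖ ≤ ‖y n - w n‖ * ‖f‖ := by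
              simpa using abs_real_inner_le_norm (y n - w n) f
          _ = ‖w n - y n‖ * ‖f‖ := by rw [norm_sub_rev]
      · simpa using hwy.mul_const ‖f‖
    have := (hweak f).add h0
    simp only [add_zero] at this
    apply this.congr
    intro n
    rw [← inner_add_left]
    congr 1
    abel
  -- z ∈ C
  have hzC : z ∈ C := by
    by_contra hz
    obtain ⟨f, r, hfr, hfC⟩ := geometric_hahn_banach_point_closed hCconv hCclosed hz
    set v : H := (InnerProductSpace.toDual ℝ H).symm f with hv
    have hfv : ∀ x : H, f x = ⟪x, v⟫ := by
      intro x
      rw [real_inner_comm]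
      simpa [hv] using (InnerProductSpace.toDual_symm_apply (x := v) (y := x)).symm
    have hlim : Tendsto (fun n => f (y n)) atTop (𝓝 (f z)) := by
      simpa only [hfv] using hyweak v
    have : r ≤ f z := ge_of_tendsto hlim (Eventually.of_forall fun n => (hfC _ (hyC n)).le)
    linarith
  refine ⟨hzC, ?_⟩
  -- trivial case A z = 0
  rcases eq_or_ne (A z) 0 with hAz | hAz
  · intro u hu; simp [hAz]
  have ha : (0 : ℝ) < ‖A z‖ := norm_pos_iff.mpr hAz
  -- Minty: ∀ u ∈ C, 0 ≤ ⟪A u, u - z⟫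
  have minty : ∀ u ∈ C, 0 ≤ ⟪A u, u - z⟫ := by
    intro u hu
    set K : ℝ := ‖u‖ + B + D with hKdef
    have hKnn : 0 ≤ K := by positivity
    set c : ℝ := K / lamlb + M with hc
    have hcnn : 0 ≤ c := by positivity
    -- key lower bound: ⟪A (w n), u - w n⟫ ≥ -(c * ‖w n - y n‖)
    have hkey : ∀ n, -(c * ‖w n - y n‖) ≤ ⟪A (w n), u - w n⟫ := by
      intro n
      set s : ℝ := ‖w n - y n‖ with hs
      have hsnn : 0 ≤ s := norm_nonneg _
      set ip : ℝ := ⟪A (w n), u - y n⟫ with hip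
      have hproj' := hproj n u hu
      have expand : ⟪w n - lam n • A (w n) - y n, u - y n⟫
          = ⟪w n - y n, u - y n⟫ - lam n * ip := by
        have heq : w n - lam n • A (w n) - y n = (w n - y n) - lam n • A (w n) := by abel
        rw [heq, inner_sub_left, real_inner_smul_left, hip]
      have h1 : ⟪w n - y n, u - y n⟫ ≤ lam n * ip := by
        rw [expand] at hproj'; linarith
      have hyb : ‖u - y n‖ ≤ K := by
        calc ‖u - y n‖ ≤ ‖u‖ + ‖y n‖ := norm_sub_le _ _
          _ ≤ ‖u‖ + (‖w n‖ + ‖w n - y n‖) := by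
              gcongr
              calc ‖y n‖ = ‖w n - (w n - y n)‖ := by congr 1; abel
                _ ≤ ‖w n‖ + ‖w n - y n‖ := norm_sub_le _ _
          _ ≤ ‖u‖ + (B + D) := by gcongr; exacts [hB n, hD n]
          _ = K := by rw [hKdef]; ring
      have hlow : -(s * K) ≤ ⟪w n - y n, u - y n⟫ := by
        have hcs : |(⟪w n - y n, u - y n⟫ : ℝ)| ≤ s * ‖u - y n‖ := abs_real_inner_le_norm _ _
        have h2 : s * ‖u - y n‖ ≤ s * K := mul_le_mul_of_nonneg_left hyb hsnn
        have := neg_abs_le (⟪w n - y n, u - y n⟫ : ℝ)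
        linarith
      -- so lam n * ip ≥ -(s*K), hence ip ≥ -(K/lamlb * s)
      have h3 : -(K / lamlb * s) ≤ ip := by
        rcases le_or_gt 0 ip with hpos | hneg
        · have : -(K / lamlb * s) ≤ 0 := by
            have : 0 ≤ K / lamlb * s := by positivity
            linarith
          linarith
        · have hmul : lam n * ip ≤ lamlb * ip := by
            nlinarith [hlam n]
          have h4 : -(s * K) ≤ lamlb * ip := by linarith
          have hq : K / lamlb * lamlb = K := div_mul_cancel₀ _ (ne_of_gt hlamlb)
          nlinarith [h4, hlamlb, hq, hsnn]
      have h5 : -(M * s) ≤ ⟪A (w n), y n - w n⟫ := by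
        have hcs : |(⟪A (w n), y n - w n⟫ : ℝ)| ≤ ‖A (w n)‖ * ‖y n - w n‖ :=
          abs_real_inner_le_norm _ _
        rw [norm_sub_rev] at hcs
        have hb : ‖A (w n)‖ * ‖w n - y n‖ ≤ M * s := by
          rw [← hs]; exact mul_le_mul_of_nonneg_right (hAwb n) hsnn
        have := neg_abs_le (⟪A (w n), y n - w n⟫ : ℝ)
        linarith
      have split : ⟪A (w n), u - w n⟫ = ip + ⟪A (w n), y n - w n⟫ := by
        rw [hip, ← inner_add_right]; congr 1; abel
      rw [split, hc]; ring_nf; ring_nf at h3 h5; linarith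
    -- eventual lower bound on ‖A (w n)‖
    have hliminf := hAweak w z hweak
    have hev : ∀ᶠ n in atTop, ‖A z‖ / 2 < ‖A (w n)‖ :=
      eventually_lt_of_lt_liminf (lt_of_lt_of_le (half_lt_self ha) hliminf)
        (isBoundedUnder_of ⟨0, fun n => norm_nonneg _⟩)
    -- the perturbed points
    set zs : ℕ → H := fun n => u + (c * ‖w n - y n‖ / ‖A (w n)‖ ^ 2) • A (w n) with hzs
    have h6 : ∀ n, 0 ≤ ⟪A (zs n), zs n - w n⟫ := by
      intro n
      apply hApseudo
      rcases eq_or_ne (A (w n)) 0 with h0 | h0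
      · simp [h0]
      · have hpos : (0 : ℝ) < ‖A (w n)‖ ^ 2 := pow_pos (norm_pos_iff.mpr h0) 2
        have : ⟪A (w n), zs n - w n⟫
            = ⟪A (w n), u - w n⟫ + c * ‖w n - y n‖ := by
          have heq : zs n - w n = (u - w n) + (c * ‖w n - y n‖ / ‖A (w n)‖ ^ 2) • A (w n) := by
            simp only [hzs]; abel
          rw [heq, inner_add_right, real_inner_smul_right, real_inner_self_eq_norm_sq,
            div_mul_cancel₀]
          exact ne_of_gt hpos
        rw [this]
        linarith [hkey n]
    -- ‖zs n - u‖ → 0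
    have hzsnorm : ∀ n, ‖zs n - u‖ = c * ‖w n - y n‖ / ‖A (w n)‖ := by
      intro n
      rcases eq_or_ne (A (w n)) 0 with h0 | h0
      · simp [hzs, h0]
      · have hpos : (0 : ℝ) < ‖A (w n)‖ := norm_pos_iff.mpr h0
        have : zs n - u = (c * ‖w n - y n‖ / ‖A (w n)‖ ^ 2) • A (w n) := by
          rw [hzs]; exact add_sub_cancel_left _ _
        rw [this, norm_smul, Real.norm_eq_abs, abs_of_nonneg (by positivity)]
        field_simp
    have ht : Tendsto (fun n => ‖zs n - u‖) atTop (𝓝 0) := by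
      apply squeeze_zero' (Eventually.of_forall fun n => norm_nonneg _)
        (g := fun n => c * ‖w n - y n‖ / (‖A z‖ / 2))
      · filter_upwards [hev] with n hn
        rw [hzsnorm n]
        exact div_le_div_of_nonneg_left (by positivity) (by positivity) hn.le
      · have := (hwy.const_mul c).div_const (‖A z‖ / 2)
        simpa using this
    -- strong convergence of zs to u, giving the limit
    have hAu := hweak (A u)
    have hmain : ∀ n, 0 ≤ (⟪A u, u⟫ - ⟪w n, A u⟫)
        + (⟪A (zs n) - A u, zs n - w n⟫ + ⟪A u, zs n - u⟫) := by
      intro n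
      have hsplit : ⟪A (zs n), zs n - w n⟫
          = (⟪A u, u⟫ - ⟪w n, A u⟫)
            + (⟪A (zs n) - A u, zs n - w n⟫ + ⟪A u, zs n - u⟫) := by
        have e1 : ⟪A (zs n), zs n - w n⟫
            = ⟪A (zs n) - A u, zs n - w n⟫ + ⟪A u, zs n - w n⟫ := by
          rw [← inner_add_left]; congr 1; abel
        have e2 : (⟪A u, zs n - w n⟫ : ℝ) = ⟪A u, zs n - u⟫ + ⟪A u, u - w n⟫ := by
          rw [← inner_add_right]; congr 1; abel
        have e3 : (⟪A u, u - w n⟫ : ℝ) = ⟪A u, u⟫ - ⟪w n, A u⟫ := by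
          rw [inner_sub_right, real_inner_comm (w n) (A u)]
        rw [e1, e2, e3]; ring
      rw [← hsplit]; exact h6 n
    have herr : Tendsto (fun n => (⟪A (zs n) - A u, zs n - w n⟫ : ℝ) + ⟪A u, zs n - u⟫)
        atTop (𝓝 0) := by
      apply squeeze_zero_norm
        (a := fun n => |L| * ‖zs n - u‖ * (‖zs n - u‖ + (‖u‖ + B)) + ‖A u‖ * ‖zs n - u‖)
      · intro n
        have hb1 : ‖zs n - w n‖ ≤ ‖zs n - u‖ + (‖u‖ + B) := by
          have heq : zs n - w n = (zs n - u) + (u - w n) := by abel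
          calc ‖zs n - w n‖ ≤ ‖zs n - u‖ + ‖u - w n‖ := by
                rw [heq]; exact norm_add_le _ _
            _ ≤ ‖zs n - u‖ + (‖u‖ + B) := by
                gcongr
                exact (norm_sub_le _ _).trans (by gcongr; exact hB n)
        have hc1 : |(⟪A (zs n) - A u, zs n - w n⟫ : ℝ)|
            ≤ |L| * ‖zs n - u‖ * (‖zs n - u‖ + (‖u‖ + B)) := by
          calc |(⟪A (zs n) - A u, zs n - w n⟫ : ℝ)| ≤ ‖A (zs n) - A u‖ * ‖zs n - w n‖ :=
                abs_real_inner_le_norm _ _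
            _ ≤ (|L| * ‖zs n - u‖) * (‖zs n - u‖ + (‖u‖ + B)) := by
                apply mul_le_mul (hALip' _ _) hb1 (norm_nonneg _) (by positivity)
            _ = |L| * ‖zs n - u‖ * (‖zs n - u‖ + (‖u‖ + B)) := by ring
        have hc2 : |(⟪A u, zs n - u⟫ : ℝ)| ≤ ‖A u‖ * ‖zs n - u‖ := abs_real_inner_le_norm _ _
        calc ‖(⟪A (zs n) - A u, zs n - w n⟫ : ℝ) + ⟪A u, zs n - u⟫‖
            ≤ |(⟪A (zs n) - A u, zs n - w n⟫ : ℝ)| + |(⟪A u, zs n - u⟫ : ℝ)| := by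
              simpa using abs_add_le _ _
          _ ≤ |L| * ‖zs n - u‖ * (‖zs n - u‖ + (‖u‖ + B)) + ‖A u‖ * ‖zs n - u‖ := by
              gcongr
      · have h1 := ((ht.const_mul |L|).mul (ht.add_const (‖u‖ + B))).add (ht.const_mul ‖A u‖)
        simpa [mul_assoc] using h1
    have hfin : Tendsto (fun n => (⟪A u, u⟫ - ⟪w n, A u⟫)
        + ((⟪A (zs n) - A u, zs n - w n⟫ : ℝ) + ⟪A u, zs n - u⟫))
        atTop (𝓝 (⟪A u, u - z⟫)) := by
      have h2 := ((tendsto_const_nhds (x := (⟪A u, u⟫ : ℝ))).sub hAu).add herr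
      have heq : (⟪A u, u⟫ : ℝ) - ⟪z, A u⟫ + 0 = ⟪A u, u - z⟫ := by
        rw [inner_sub_right, real_inner_comm z (A u)]
        ring
      rw [heq] at h2
      exact h2
    exact ge_of_tendsto hfin (Eventually.of_forall hmain)
  -- Minty → VI
  intro u hu
  set t : ℕ → ℝ := fun n => 1 / (n + 1) with htdef
  have htpos : ∀ n, 0 < t n := fun n => by positivity
  have htle : ∀ n, t n ≤ 1 := by
    intro n
    rw [htdef]
    rw [div_le_one (by positivity)]
    simp
  have hxC : ∀ n, z + t n • (u - z) ∈ C := by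
    intro n
    have := hCconv hzC hu (by linarith [htle n]) (htpos n).le (by ring : (1 - t n) + t n = 1)
    convert this using 1
    rw [smul_sub, sub_smul, one_smul]
    abel
  have hpos : ∀ n, 0 ≤ ⟪A (z + t n • (u - z)), u - z⟫ := by
    intro n
    have hm := minty _ (hxC n)
    have heq : z + t n • (u - z) - z = t n • (u - z) := by abel
    rw [heq, real_inner_smul_right] at hm
    exact nonneg_of_mul_nonneg_right hm (htpos n)
  have hconv : Tendsto (fun n => (⟪A (z + t n • (u - z)), u - z⟫ : ℝ)) atTop
      (𝓝 (⟪A z, u - z⟫)) := by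
    have hdiff : Tendsto (fun n => (⟪A (z + t n • (u - z)) - A z, u - z⟫ : ℝ)) atTop (𝓝 0) := by
      apply squeeze_zero_norm (a := fun n => |L| * ‖u - z‖ ^ 2 * t n)
      · intro n
        calc ‖(⟪A (z + t n • (u - z)) - A z, u - z⟫ : ℝ)‖
            ≤ ‖A (z + t n • (u - z)) - A z‖ * ‖u - z‖ := by
              simpa using abs_real_inner_le_norm _ _
          _ ≤ (|L| * ‖z + t n • (u - z) - z‖) * ‖u - z‖ := by
              gcongr
              exact hALip' _ _
          _ = |L| * ‖u - z‖ ^ 2 * t n := by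
              have heq : z + t n • (u - z) - z = t n • (u - z) := by abel
              rw [heq, norm_smul, Real.norm_eq_abs, abs_of_pos (htpos n)]
              ring
      · have := tendsto_one_div_add_atTop_nhds_zero_nat.const_mul (|L| * ‖u - z‖ ^ 2)
        simpa [htdef] using this
    have := hdiff.add (tendsto_const_nhds (x := (⟪A z, u - z⟫ : ℝ)))
    simp only [zero_add] at this
    apply this.congr
    intro n
    rw [← inner_add_left]
    congr 1
    abel
  exact ge_of_tendsto hconv (Eventually.of_forall hpos)
end

section
/- Let H be a real Hilbert space, L > 0, r > 0, and assume either (a) A : H → H is L-Lipschitz continuous and r-strongly monotone and B : H → 2^H is maximal monotone, or (b) A : H → H is L-Lipschitz continuous and monotone and B : H → 2^H is maximal monotone and r-strongly monotone. Assume Ω := {x ∈ H : −Ax ∈ Bx} ≠ ∅. Let μ ∈ (0,1), λ₁ > 0, pₙ ≥ 0 with ∑ pₙ < ∞, μₙ ≥ 0 with μₙ → 0, set λ̂ := min{μ/L, λ₁} and τ := 1 − (1/2)·min{1 − μ, 2λ̂r}, and assume τ ∈ (1/2, 1). Suppose the parameters satisfy: (c1) 0 ≤ βₙ ≤ β < (1/2)(1/τ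 − 1); (c2) 0 ≤ αₙ ≤ α < (1 − τ)/τ; (c3) max{(1 − β)/(1 + α − β), β/(1 + β − τ(1 + α))} < θ ≤ θₙ₋₁ ≤ θₙ ≤ (−1 − β + √((1 + β)² − 4(1/τ − 1 − 2β)(β − 1)))/(2(1/τ − 1 − 2β)) for all n. Let (xₙ), (wₙ), (zₙ), (yₙ), (λₙ) be generated by Algorithm 3.1. Then (xₙ) converges linearly to some p ∈ Ω: setting q := (1 + β) + θ(τ(1 + α) − (1 + β)), one has q ∈ (0, 1) and there exists a positive integer N such that for all n ≥ N, ‖xₙ₊₁ − p‖² ≤ q^{n−N}·(‖x_{N+1} − p‖² + σ_N‖x_{N+1} − x_N‖²), where σ_N := ((1 − θ_N)/θ_N)(1 − β). -/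
open Filter
open scoped Topology RealInnerProductSpace Classical

set_option maxHeartbeats 2000000

section Helpers

variable {H : Type*} [NormedAddCommGroup H] [InnerProductSpace ℝ H]

lemma aux_expand_sq (s t : ℝ) (u v : H) :
    ‖s • u + t • v‖ ^ 2 = s^2 * ‖u‖^2 + 2*s*t*⟪u, v⟫ + t^2 * ‖v‖^2 := by
  rw [norm_add_sq_real, real_inner_smul_left, real_inner_smul_right,
    norm_smul, norm_smul, mul_pow, mul_pow, Real.norm_eq_abs, Real.norm_eq_abs,
    sq_abs, sq_abs]
  ring

lemma aux_comb_sq (t : ℝ) (a b c : H) :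
    ‖(1-t) • a + t • b - c‖ ^ 2
      = (1-t) * ‖a-c‖^2 + t * ‖b-c‖^2 - t*(1-t) * ‖a-b‖^2 := by
  have h1 : (1-t) • a + t • b - c = (1-t) • (a-c) + t • (b-c) := by module
  have h2 : a - b = (1:ℝ) • (a - c) + (-1:ℝ) • (b - c) := by module
  rw [h1, aux_expand_sq, h2, aux_expand_sq]
  ring

lemma aux_sub_smul_sq_ge (s : ℝ) (hs : 0 < s) (u v : H) :
    (1 - s) * ‖u‖^2 + (1 - 1/s) * ‖v‖^2 ≤ ‖u - v‖ ^ 2 := by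
  have h2 : u - v = (1:ℝ) • u + (-1:ℝ) • v := by module
  have h3 : (0:ℝ) ≤ s^2 * ‖u‖^2 + 2*s*(-1)*⟪u, v⟫ + (-1)^2 * ‖v‖^2 := by
    rw [← aux_expand_sq]; positivity
  rw [h2, aux_expand_sq]
  have h5 : s * ((1/s) * ‖v‖^2) = ‖v‖^2 := by field_simp
  nlinarith [hs, mul_pos hs hs]

lemma aux_sub_smul_bound (β bm : ℝ) (hbm0 : 0 ≤ bm) (hbmβ : bm ≤ β) (hβ1 : β < 1)
    (u v : H) :
    (1-β)*‖u‖^2 - β*(1-β)*‖v‖^2 ≤ ‖u - bm • v‖^2 := by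
  rcases eq_or_lt_of_le (hbm0.trans hbmβ) with h | h
  · have hβ : β = 0 := h.symm
    have hbm : bm = 0 := le_antisymm (hβ ▸ hbmβ) hbm0
    simp [hbm, hβ]
  · refine le_trans ?_ (aux_sub_smul_sq_ge β h u (bm • v))
    have hns : ‖bm • v‖^2 = bm^2 * ‖v‖^2 := by
      rw [norm_smul, mul_pow, Real.norm_eq_abs, sq_abs]
    rw [hns]
    have hβinv : β * (1/β) = 1 := mul_one_div_cancel (ne_of_gt h)
    have h1 : (1 - 1/β) * bm^2 ≥ (1 - 1/β) * β^2 := by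
      apply mul_le_mul_of_nonpos_left (by nlinarith) ?_
      have h3 : 1 ≤ 1/β := by
        rw [le_div_iff₀ h]; linarith
      linarith
    have h2 : (1 - 1/β) * β^2 = β^2 - β := by
      have h4 : (1/β) * β^2 = β := by
        field_simp
      nlinarith [h4]
    nlinarith [sq_nonneg ‖v‖]

lemma aux_coeff_bound (τ β α θ t t' βm αm : ℝ)
    (hτ0 : 1/2 < τ) (hτ1 : τ < 1)
    (hβ0 : 0 ≤ β) (hβlt : β < (1/2) * (1/τ - 1))
    (hα0 : 0 ≤ α) (hαlt : α < 1/τ - 1)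
    (hβm : 0 ≤ βm) (hβmβ : βm ≤ β) (hαm : 0 ≤ αm) (hαmα : αm ≤ α)
    (hθ1 : (1-β) < θ * (1+α-β)) (hθ2 : β < θ * (1+β-τ*(1+α)))
    (hθt' : θ ≤ t') (ht't : t' ≤ t) (ht1 : t < 1)
    (hft : (1/τ-1-2*β) * t^2 + (1+β)*t + (β-1) ≤ 0) :
    ((1-t)*(1+βm) + t*τ*(1+αm) ≤ (1+β) + θ*(τ*(1+α)-(1+β))) ∧
    ((1-t)*βm*(1+βm) + t*τ*αm*(1+αm) + ((1-t)/t)*β*(1-β)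
       ≤ ((1+β) + θ*(τ*(1+α)-(1+β))) * (((1-t')/t')*(1-β))) := by
  have hτpos : 0 < τ := by linarith
  have hτα : τ*(1+α) < 1 := by
    have : τ * (1/τ) = 1 := by field_simp
    nlinarith
  have hβhalf : β < 1/2 := by
    have h1 : 1/τ - 1 < 1 := by
      have : τ * (1/τ) = 1 := by field_simp
      nlinarith
    nlinarith
  have hθpos : 0 < θ := by nlinarith
  have htpos : 0 < t := by linarith
  have ht'pos : 0 < t' := by linarith
  have hθt : θ ≤ t := by linarith
  have hq0 : 0 < (1+β) + θ*(τ*(1+α)-(1+β)) := by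
    have hθ1' : θ < 1 := by linarith
    nlinarith
  constructor
  · nlinarith [mul_nonneg (le_of_lt htpos) (sub_nonneg.mpr hαmα),
      mul_nonneg (sub_nonneg.mpr (le_of_lt ht1)) (sub_nonneg.mpr hβmβ),
      mul_nonneg (sub_nonneg.mpr hθt) (sub_nonneg.mpr (le_of_lt hτα))]
  · set q := (1+β) + θ*(τ*(1+α)-(1+β)) with hq
    have hσ : ((1-t)/t)*(1-β) ≤ ((1-t')/t')*(1-β) := by
      have h : (1-t)/t ≤ (1-t')/t' := by
        rw [div_le_div_iff₀ htpos ht'pos]; nlinarith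
      exact mul_le_mul_of_nonneg_right h (by linarith)
    have hqσ : q * (((1-t)/t)*(1-β)) ≤ q * (((1-t')/t')*(1-β)) :=
      mul_le_mul_of_nonneg_left hσ (le_of_lt hq0)
    refine le_trans ?_ hqσ
    have hmono : (1-t)*βm*(1+βm) + t*τ*αm*(1+αm) + ((1-t)/t)*β*(1-β)
        ≤ (1-t)*β*(1+β) + t*τ*α*(1+α) + ((1-t)/t)*β*(1-β) := by
      have h1 : βm*(1+βm) ≤ β*(1+β) := by nlinarith
      have h2 : αm*(1+αm) ≤ α*(1+α) := by nlinarith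
      have := mul_le_mul_of_nonneg_left h1 (by linarith : (0:ℝ) ≤ 1-t)
      have := mul_le_mul_of_nonneg_left h2 (by positivity : (0:ℝ) ≤ t*τ)
      nlinarith
    refine le_trans hmono ?_
    have hqt : (1+β) - t*((1+β)-τ*(1+α)) ≤ q := by
      have : 0 ≤ (1+β)-τ*(1+α) := by nlinarith
      nlinarith
    rw [← sub_nonneg]
    have key : 0 ≤ ((1+β) - t*((1+β)-τ*(1+α))) * (((1-t)/t)*(1-β))
        - ((1-t)*β*(1+β) + t*τ*α*(1+α) + ((1-t)/t)*β*(1-β)) := by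
      rw [← sub_nonneg] at hqt
      have hX : 0 ≤ t*(1+α-β)-(1-β) := by
        have h1 : θ*(1+α-β) ≤ t*(1+α-β) :=
          mul_le_mul_of_nonneg_right hθt (by linarith)
        linarith
      have hG : 0 ≤ t*(t*(1+α-β)-(1-β)) := mul_nonneg htpos.le hX
      have hh : t*(1-t)*β*(1+β) + t^2*τ*α*(1+α) + (1-t)*β*(1-β)
          ≤ ((1+β) - t*((1+β)-τ*(1+α))) * ((1-t)*(1-β)) := by
        have hG' : τ*(1+α) * (t*(t*(1+α-β)-(1-β))) ≤ t*(t*(1+α-β)-(1-β)) := by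
          nlinarith
        nlinarith [sq_nonneg t, mul_pos htpos htpos]
      have key0 : 0 ≤ ((1+β) - t*((1+β)-τ*(1+α))) * ((1-t)*(1-β))
          - (t*(1-t)*β*(1+β) + t^2*τ*α*(1+α) + (1-t)*β*(1-β)) := by linarith
      have expand : ((1+β) - t*((1+β)-τ*(1+α))) * (((1-t)/t)*(1-β))
          - ((1-t)*β*(1+β) + t*τ*α*(1+α) + ((1-t)/t)*β*(1-β))
          = (1/t) * (((1+β) - t*((1+β)-τ*(1+α))) * ((1-t)*(1-β))
          - (t*(1-t)*β*(1+β) + t^2*τ*α*(1+α) + (1-t)*β*(1-β))) := by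
        field_simp
      rw [expand]
      exact mul_nonneg (by positivity) key0
    have : ((1+β) - t*((1+β)-τ*(1+α))) * (((1-t)/t)*(1-β)) ≤ q * (((1-t)/t)*(1-β)) := by
      apply mul_le_mul_of_nonneg_right hqt
      have h1 : 0 ≤ (1-t)/t := div_nonneg (by linarith) htpos.le
      nlinarith
    linarith

lemma aux_root_facts (τ β t : ℝ) (hτ0 : 1/2 < τ) (hτ1 : τ < 1)
    (hβ0 : 0 ≤ β) (hβlt : β < (1/2) * (1/τ - 1)) (ht0 : 0 ≤ t)
    (htR : t ≤ (-1 - β + Real.sqrt ((1+β)^2 - 4*(1/τ-1-2*β)*(β-1))) / (2*(1/τ-1-2*β))) :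
    (1/τ-1-2*β) * t^2 + (1+β)*t + (β-1) ≤ 0 ∧ t < 1 := by
  have hτpos : 0 < τ := by linarith
  have hiτ : 1 < 1/τ := by
    rw [lt_div_iff₀ hτpos]; linarith
  set s := 1/τ-1-2*β with hs
  have hspos : 0 < s := by simp only [hs]; linarith
  have hiτ2 : 1/τ < 2 := by
    rw [div_lt_iff₀ hτpos]; linarith
  have hβ1 : β < 1 := by simp only [hs] at hspos ⊢; linarith
  set D := (1+β)^2 - 4*s*(β-1) with hD
  have hDpos : 0 ≤ D := by nlinarith
  set u := Real.sqrt D with hu'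
  have hu : u^2 = D := Real.sq_sqrt hDpos
  have hunn : 0 ≤ u := Real.sqrt_nonneg _
  have hv : 2*s*t ≤ -1 - β + u := by
    have h2s : 0 < 2*s := by linarith
    calc 2*s*t ≤ 2*s*((-1 - β + u)/(2*s)) := by
          apply mul_le_mul_of_nonneg_left htR (le_of_lt h2s)
        _ = -1 - β + u := by field_simp
  have hft : s*t^2 + (1+β)*t + (β-1) ≤ 0 := by
    have hvpos : 0 ≤ 2*s*t + 1 + β := by nlinarith
    have hsq : (2*s*t + 1 + β)^2 ≤ u^2 := by nlinarith
    nlinarith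
  refine ⟨hft, ?_⟩
  by_contra hcon
  push_neg at hcon
  have h1 : 0 ≤ (t-1)*(s*(t+1)+(1+β)) :=
    mul_nonneg (by linarith) (by nlinarith)
  have hs2 : 0 < s + 2*β := by simp only [hs]; linarith
  nlinarith

lemma aux_contraction (A : H → H) (r τ μ lamn lh : ℝ) (w y p0 u : H)
    (hr : 0 < r) (hμ0 : 0 < μ) (hμ1 : μ < 1)
    (hlh : 0 < lh) (hlam : lh ≤ lamn)
    (hmono : r * ‖y - p0‖^2 ≤ ⟪u + A y, y - p0⟫)
    (hu : lamn • u = w - y - lamn • A w)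
    (hstep : lamn * ‖A w - A y‖ ≤ Real.sqrt μ * ‖w - y‖)
    (hτ : τ = 1 - (1/2) * min (1-μ) (2*lh*r)) :
    ‖y - lamn • (A y - A w) - p0‖^2 ≤ τ * ‖w - p0‖^2 := by
  have hv : y - lamn • (A y - A w) - p0 = (1:ℝ) • (y - p0) + (-lamn) • (A y - A w) := by
    module
  have hV : ‖y - lamn • (A y - A w) - p0‖^2
      = ‖y - p0‖^2 + 2*1*(-lamn)*⟪y - p0, A y - A w⟫ + lamn^2 * ‖A y - A w‖^2 := by
    rw [hv, aux_expand_sq]; ring_nf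
  have hw : w - p0 = (1:ℝ) • (w - y) + (1:ℝ) • (y - p0) := by module
  have hW : ‖w - p0‖^2 = ‖w - y‖^2 + 2*1*1*⟪w - y, y - p0⟫ + ‖y - p0‖^2 := by
    rw [hw, aux_expand_sq]; ring_nf
  have hvec : lamn • (u + A y) = w - y - lamn • (A w - A y) := by
    rw [smul_add, hu]; module
  have hinner : lh * r * ‖y - p0‖^2
      ≤ ⟪w - y, y - p0⟫ - lamn * ⟪A w - A y, y - p0⟫ := by
    have h1 : ⟪w - y - lamn • (A w - A y), y - p0⟫
        = ⟪w - y, y - p0⟫ - lamn * ⟪A w - A y, y - p0⟫ := by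
      rw [inner_sub_left, real_inner_smul_left]
    have h2 : ⟪w - y - lamn • (A w - A y), y - p0⟫ = lamn * ⟪u + A y, y - p0⟫ := by
      rw [← hvec, real_inner_smul_left]
    have h3 : lamn * (r * ‖y - p0‖^2) ≤ lamn * ⟪u + A y, y - p0⟫ :=
      mul_le_mul_of_nonneg_left hmono (by linarith)
    have h4 : lh * (r * ‖y - p0‖^2) ≤ lamn * (r * ‖y - p0‖^2) :=
      mul_le_mul_of_nonneg_right hlam (by positivity)
    rw [← h1, h2]; linarith
  have hsq : lamn^2 * ‖A y - A w‖^2 ≤ μ * ‖w - y‖^2 := by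
    have h1 : (lamn * ‖A w - A y‖)^2 ≤ (Real.sqrt μ * ‖w - y‖)^2 := by
      apply sq_le_sq' _ hstep
      have h2 : 0 ≤ lamn * ‖A w - A y‖ := mul_nonneg (by linarith) (norm_nonneg _)
      have h3 : 0 ≤ Real.sqrt μ * ‖w - y‖ := mul_nonneg (Real.sqrt_nonneg _) (norm_nonneg _)
      linarith
    rw [norm_sub_rev (A y)]
    calc lamn^2 * ‖A w - A y‖^2 = (lamn * ‖A w - A y‖)^2 := by ring
      _ ≤ (Real.sqrt μ * ‖w - y‖)^2 := h1
      _ = μ * ‖w - y‖^2 := by rw [mul_pow, Real.sq_sqrt hμ0.le]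
  have hW2 : ‖w - p0‖^2 ≤ 2*‖w - y‖^2 + 2*‖y - p0‖^2 := by
    rw [hW]
    nlinarith [real_inner_le_norm (w - y) (y - p0), sq_nonneg (‖w - y‖ - ‖y - p0‖),
      norm_nonneg (w - y), norm_nonneg (y - p0)]
  set m := min (1-μ) (2*lh*r) with hm
  have hm1 : m ≤ 1 - μ := min_le_left _ _
  have hm2 : m ≤ 2*lh*r := min_le_right _ _
  have hm0 : 0 < m := lt_min (by linarith) (by positivity)
  have hWnn : 0 ≤ ‖w - p0‖^2 := sq_nonneg _
  have hic : ⟪y - p0, A y - A w⟫ = -⟪A w - A y, y - p0⟫ := by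
    rw [real_inner_comm, ← inner_neg_left, neg_sub]
  rw [hV, hτ, hic]
  nlinarith [sq_nonneg (‖w - y‖), sq_nonneg (‖y - p0‖)]

lemma aux_lam_facts (A : H → H) (L μ : ℝ) (hL : 0 < L) (hμ0 : 0 < μ) (hμ1 : μ < 1)
    (Lip : ∀ x y : H, ‖A x - A y‖ ≤ L * ‖x - y‖)
    (p μ' lam : ℕ → ℝ) (w y : ℕ → H)
    (hlam1 : 0 < lam 1) (hp : ∀ n, 1 ≤ n → 0 ≤ p n) (hpsum : Summable p)
    (hμ' : ∀ n, 1 ≤ n → 0 ≤ μ' n) (hμ'lim : Tendsto μ' atTop (𝓝 0))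
    (hstep : ∀ n, 1 ≤ n → lam (n+1) =
      if A (w n) = A (y n) then lam n + p n
      else min ((μ + μ' n) * ‖w n - y n‖ / ‖A (w n) - A (y n)‖) (lam n + p n)) :
    (∀ n, 1 ≤ n → min (μ/L) (lam 1) ≤ lam n) ∧
    (∃ N : ℕ, 1 ≤ N ∧ ∀ n, N ≤ n →
      lam n * ‖A (w n) - A (y n)‖ ≤ Real.sqrt μ * ‖w n - y n‖) := by
  set lh := min (μ/L) (lam 1) with hlh
  have hlhpos : 0 < lh := lt_min (div_pos hμ0 hL) hlam1
  have LB : ∀ n, 1 ≤ n → lh ≤ lam n := by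
    intro n hn
    induction n, hn using Nat.le_induction with
    | base => exact min_le_right _ _
    | succ n hn ih =>
      rw [hstep n hn]
      split_ifs with hAeq
      · have := hp n hn; linarith
      · refine le_min ?_ (by have := hp n hn; linarith)
        have hApos : 0 < ‖A (w n) - A (y n)‖ := by
          rw [norm_pos_iff, sub_ne_zero]; exact hAeq
        have hwy : 0 < ‖w n - y n‖ := by
          rcases (norm_nonneg (w n - y n)).lt_or_eq with h | h
          · exact h
          · exfalso
            have h1 := Lip (w n) (y n)
            rw [← h] at h1
            nlinarith
        refine le_trans (min_le_left _ _) ?_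
        rw [le_div_iff₀ hApos]
        have h1 : ‖A (w n) - A (y n)‖ ≤ L * ‖w n - y n‖ := Lip _ _
        have h2 := hμ' n hn
        calc μ/L * ‖A (w n) - A (y n)‖ ≤ μ/L * (L * ‖w n - y n‖) := by
              apply mul_le_mul_of_nonneg_left h1 (le_of_lt (div_pos hμ0 hL))
          _ = μ * ‖w n - y n‖ := by field_simp
          _ ≤ (μ + μ' n) * ‖w n - y n‖ := by nlinarith
  have hbd : ∀ n, 1 ≤ n → lam (n+1) ≤ lam n + p n := by
    intro n hn
    rw [hstep n hn]
    split_ifs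
    · exact le_rfl
    · exact min_le_right _ _
  refine ⟨LB, ?_⟩
  have hpsum' : Summable (fun i => p (i+1)) := by
    exact (summable_nat_add_iff 1).2 hpsum
  set T := ∑' i, p (i+1) with hT
  set S : ℕ → ℝ := fun j => ∑ i ∈ Finset.range j, p (i+1) with hS
  set c : ℕ → ℝ := fun j => lam (j+1) - S j with hc
  have hcant : Antitone c := by
    apply antitone_nat_of_succ_le
    intro j
    have h1 := hbd (j+1) (Nat.le_add_left 1 j)
    simp only [hc, hS, Finset.sum_range_succ]
    linarith
  have hSle : ∀ j, S j ≤ T := by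
    intro j
    exact Summable.sum_le_tsum (Finset.range j)
      (fun i _ => hp (i+1) (Nat.le_add_left 1 i)) hpsum'
  have hcbdd : BddBelow (Set.range c) := by
    refine ⟨lh - T, ?_⟩
    rintro _ ⟨j, rfl⟩
    have h1 := LB (j+1) (Nat.le_add_left 1 j)
    have h2 := hSle j
    simp only [hc]
    linarith
  have hctend : Tendsto c atTop (𝓝 (⨅ j, c j)) := tendsto_atTop_ciInf hcant hcbdd
  have hStend : Tendsto S atTop (𝓝 T) := hpsum'.hasSum.tendsto_sum_nat
  set l := (⨅ j, c j) + T with hl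
  have hlamtend1 : Tendsto (fun j => lam (j+1)) atTop (𝓝 l) := by
    have h0 : (fun j => lam (j+1)) = fun j => c j + S j := by
      funext j; simp [hc]
    rw [h0]
    exact hctend.add hStend
  have hlamtend : Tendsto lam atTop (𝓝 l) := by
    exact (tendsto_add_atTop_iff_nat 1).mp hlamtend1
  have hllh : lh ≤ l :=
    ge_of_tendsto hlamtend1 (Eventually.of_forall fun j => LB (j+1) (Nat.le_add_left 1 j))
  have hlpos : 0 < l := lt_of_lt_of_le hlhpos hllh
  have hsμpos : 0 < Real.sqrt μ := Real.sqrt_pos.mpr hμ0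
  have hμsμ : μ < Real.sqrt μ := by
    have h1 : Real.sqrt μ < 1 := by
      rw [show (1:ℝ) = Real.sqrt 1 by simp]
      exact Real.sqrt_lt_sqrt hμ0.le hμ1
    nlinarith [Real.mul_self_sqrt hμ0.le]
  have hgtend : Tendsto (fun n => Real.sqrt μ * lam (n+1) - lam n * (μ + μ' n))
      atTop (𝓝 (Real.sqrt μ * l - l * (μ + 0))) :=
    ((tendsto_const_nhds.mul hlamtend1).sub
      (hlamtend.mul (tendsto_const_nhds.add hμ'lim)))
  have hpos : 0 < Real.sqrt μ * l - l * (μ + 0) := by nlinarith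
  have hev : ∀ᶠ n in atTop, 0 < Real.sqrt μ * lam (n+1) - lam n * (μ + μ' n) :=
    hgtend.eventually (eventually_gt_nhds hpos)
  obtain ⟨N0, hN0⟩ := eventually_atTop.mp hev
  refine ⟨max N0 1, le_max_right _ _, ?_⟩
  intro n hn
  have hn1 : 1 ≤ n := le_trans (le_max_right N0 1) hn
  have hnN0 : N0 ≤ n := le_trans (le_max_left N0 1) hn
  have hratio := hN0 n hnN0
  have hsi : lam (n+1) * ‖A (w n) - A (y n)‖ ≤ (μ + μ' n) * ‖w n - y n‖ := by
    rw [hstep n hn1]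
    split_ifs with hAeq
    · rw [hAeq, sub_self, norm_zero, mul_zero]
      have := hμ' n hn1
      positivity
    · have hApos : 0 < ‖A (w n) - A (y n)‖ := by
        rw [norm_pos_iff, sub_ne_zero]; exact hAeq
      calc min ((μ + μ' n) * ‖w n - y n‖ / ‖A (w n) - A (y n)‖) (lam n + p n)
            * ‖A (w n) - A (y n)‖
          ≤ ((μ + μ' n) * ‖w n - y n‖ / ‖A (w n) - A (y n)‖) * ‖A (w n) - A (y n)‖ := by
            apply mul_le_mul_of_nonneg_right (min_le_left _ _) (norm_nonneg _)
        _ = (μ + μ' n) * ‖w n - y n‖ := div_mul_cancel₀ _ (ne_of_gt hApos)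
  have hlamn1pos : 0 < lam (n+1) := lt_of_lt_of_le hlhpos (LB (n+1) (by omega))
  have hlamnpos : 0 < lam n := lt_of_lt_of_le hlhpos (LB n hn1)
  rw [← mul_le_mul_iff_of_pos_right hlamn1pos]
  calc lam n * ‖A (w n) - A (y n)‖ * lam (n+1)
      = lam n * (lam (n+1) * ‖A (w n) - A (y n)‖) := by ring
    _ ≤ lam n * ((μ + μ' n) * ‖w n - y n‖) :=
        mul_le_mul_of_nonneg_left hsi hlamnpos.le
    _ = (lam n * (μ + μ' n)) * ‖w n - y n‖ := by ring
    _ ≤ (Real.sqrt μ * lam (n+1)) * ‖w n - y n‖ :=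
        mul_le_mul_of_nonneg_right (by linarith) (norm_nonneg _)
    _ = Real.sqrt μ * ‖w n - y n‖ * lam (n+1) := by ring

end Helpers
/-- Theorem 4.2: linear convergence rate of Algorithm 3.1 under Assumption 4.1. -/
theorem stmt_17
    {H : Type*} [NormedAddCommGroup H] [InnerProductSpace ℝ H] [CompleteSpace H]
    (L r : ℝ) (hL : 0 < L) (hr : 0 < r)
    (A : H → H) (B : H → Set H)
    (hcase :
      ((∀ x y : H, ‖A x - A y‖ ≤ L * ‖x - y‖) ∧
       (∀ x y : H, r * ‖x - y‖ ^ 2 ≤ ⟪A x - A y, x - y⟫) ∧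
       (∀ x y u v : H, u ∈ B x → v ∈ B y → 0 ≤ ⟪u - v, x - y⟫) ∧
       (∀ x u : H, (∀ y v : H, v ∈ B y → 0 ≤ ⟪u - v, x - y⟫) → u ∈ B x)) ∨
      ((∀ x y : H, ‖A x - A y‖ ≤ L * ‖x - y‖) ∧
       (∀ x y : H, 0 ≤ ⟪A x - A y, x - y⟫) ∧
       (∀ x y u v : H, u ∈ B x → v ∈ B y → r * ‖x - y‖ ^ 2 ≤ ⟪u - v, x - y⟫) ∧
       (∀ x u : H, (∀ y v : H, v ∈ B y → 0 ≤ ⟪u - v, x - y⟫) → u ∈ B x)))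
    (hΩ : ∃ q : H, -A q ∈ B q)
    (μ : ℝ) (hμ : μ ∈ Set.Ioo (0 : ℝ) 1)
    (alpha beta theta p μ' lam : ℕ → ℝ)
    (hlam1 : 0 < lam 1)
    (hp : ∀ n, 1 ≤ n → 0 ≤ p n) (hpsum : Summable p)
    (hμ' : ∀ n, 1 ≤ n → 0 ≤ μ' n) (hμ'lim : Tendsto μ' atTop (𝓝 0))
    (lamhat τ : ℝ)
    (hlamhat : lamhat = min (μ / L) (lam 1))
    (hτdef : τ = 1 - (1 / 2) * min (1 - μ) (2 * lamhat * r))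
    (hτ : τ ∈ Set.Ioo (1 / 2 : ℝ) 1)
    (α β θ : ℝ)
    (hc1 : (∀ n, 1 ≤ n → 0 ≤ beta n ∧ beta n ≤ β) ∧ β < (1 / 2) * (1 / τ - 1))
    (hc2 : (∀ n, 1 ≤ n → 0 ≤ alpha n ∧ alpha n ≤ α) ∧ α < (1 - τ) / τ)
    (hc3 : max ((1 - β) / (1 + α - β)) (β / (1 + β - τ * (1 + α))) < θ ∧
      ∀ n, 1 ≤ n → θ ≤ theta n ∧ theta n ≤ theta (n + 1) ∧
        theta n ≤ (-1 - β + Real.sqrt ((1 + β) ^ 2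
          - 4 * (1 / τ - 1 - 2 * β) * (β - 1))) / (2 * (1 / τ - 1 - 2 * β)))
    (x w z y : ℕ → H)
    (hw : ∀ n, 1 ≤ n → w n = x n + alpha n • (x n - x (n - 1)))
    (hz : ∀ n, 1 ≤ n → z n = x n + beta n • (x n - x (n - 1)))
    (hy : ∀ n, 1 ≤ n → (1 / lam n) • (w n - y n - lam n • A (w n)) ∈ B (y n))
    (hx : ∀ n, 1 ≤ n →
      x (n + 1) = (1 - theta n) • z n + theta n • (y n - lam n • (A (y n) - A (w n))))
    (hstep : ∀ n, 1 ≤ n → lam (n + 1) =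
      if A (w n) = A (y n) then lam n + p n
      else min ((μ + μ' n) * ‖w n - y n‖ / ‖A (w n) - A (y n)‖) (lam n + p n)) :
    ((0 : ℝ) < (1 + β) + θ * (τ * (1 + α) - (1 + β)) ∧
      (1 + β) + θ * (τ * (1 + α) - (1 + β)) < 1) ∧
    ∃ q : H, -A q ∈ B q ∧ ∃ N : ℕ, 1 ≤ N ∧ ∀ n, N ≤ n →
      ‖x (n + 1) - q‖ ^ 2 ≤
        ((1 + β) + θ * (τ * (1 + α) - (1 + β))) ^ (n - N) *
          (‖x (N + 1) - q‖ ^ 2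
            + ((1 - theta N) / theta N) * (1 - β) * ‖x (N + 1) - x N‖ ^ 2) := by
  obtain ⟨p₀, hp₀⟩ := hΩ
  obtain ⟨hτh, hτ1⟩ := hτ
  obtain ⟨hμ0, hμ1⟩ := hμ
  have hτpos : 0 < τ := by linarith
  have Lip : ∀ a b : H, ‖A a - A b‖ ≤ L * ‖a - b‖ := by
    rcases hcase with ⟨h, _⟩ | ⟨h, _⟩ <;> exact h
  have hmonoAB : ∀ yv u : H, u ∈ B yv → r * ‖yv - p₀‖^2 ≤ ⟪u + A yv, yv - p₀⟫ := by
    intro yv u hu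
    have hdec : u + A yv = (u - (-A p₀)) + (A yv - A p₀) := by abel
    rcases hcase with ⟨_, hsm, hBm, _⟩ | ⟨_, hAm, hBsm, _⟩
    · have h1 := hsm yv p₀
      have h2 := hBm yv p₀ u (-A p₀) hu hp₀
      rw [hdec, inner_add_left]; linarith
    · have h1 := hAm yv p₀
      have h2 := hBsm yv p₀ u (-A p₀) hu hp₀
      rw [hdec, inner_add_left]; linarith
  -- scalar setup
  have hβ0 : 0 ≤ β := le_trans (hc1.1 1 le_rfl).1 (hc1.1 1 le_rfl).2
  have hα0 : 0 ≤ α := le_trans (hc2.1 1 le_rfl).1 (hc2.1 1 le_rfl).2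
  have hβlt : β < (1/2)*(1/τ - 1) := hc1.2
  have hdiv : (1-τ)/τ = 1/τ - 1 := by field_simp
  have hαlt : α < 1/τ - 1 := by rw [← hdiv]; exact hc2.2
  have hiτ : τ * (1/τ) = 1 := by field_simp
  have hτα : τ * (1+α) < 1 := by
    have h1 := mul_lt_mul_of_pos_left hαlt hτpos
    nlinarith
  have hβhalf : β < 1/2 := by
    have h1 : 1/τ - 1 < 1 := by nlinarith
    nlinarith
  have hden1 : 0 < 1 + α - β := by linarith
  have hden2 : 0 < 1 + β - τ*(1+α) := by linarith
  obtain ⟨hmax, hθn'⟩ := hc3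
  rw [max_lt_iff] at hmax
  have hθ1 : 1 - β < θ * (1+α-β) := by
    have h1 := (div_lt_iff₀ hden1).mp hmax.1
    linarith
  have hθ2 : β < θ * (1+β-τ*(1+α)) := by
    have h1 := (div_lt_iff₀ hden2).mp hmax.2
    linarith
  have hθpos : 0 < θ := by
    by_contra hcon
    push_neg at hcon
    nlinarith [mul_nonneg (neg_nonneg.mpr hcon) hden1.le]
  have hθfacts : ∀ n, 1 ≤ n → θ ≤ theta n ∧ theta n < 1 ∧
      (1/τ-1-2*β) * (theta n)^2 + (1+β)*(theta n) + (β-1) ≤ 0 := by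
    intro n hn
    obtain ⟨h1, h2, h3⟩ := hθn' n hn
    obtain ⟨hf, hlt1⟩ := aux_root_facts τ β (theta n) hτh hτ1 hβ0 hβlt
      (le_trans hθpos.le h1) h3
    exact ⟨h1, hlt1, hf⟩
  have hθ1lt : θ < 1 := lt_of_le_of_lt (hθfacts 1 le_rfl).1 (hθfacts 1 le_rfl).2.1
  set qq := (1 + β) + θ * (τ * (1 + α) - (1 + β)) with hqq
  have hq1 : qq < 1 := by rw [hqq]; nlinarith
  have hq0 : 0 < qq := by
    rw [hqq]
    nlinarith [mul_nonneg (by linarith : (0:ℝ) ≤ 1+β) (by linarith : (0:ℝ) ≤ 1-θ),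
      mul_pos hθpos (mul_pos hτpos (by linarith : (0:ℝ) < 1+α))]
  clear_value qq
  refine ⟨⟨hq0, hq1⟩, p₀, hp₀, ?_⟩
  obtain ⟨LB, N0, hN01, hstepN⟩ :=
    aux_lam_facts A L μ hL hμ0 hμ1 Lip p μ' lam w y hlam1 hp hpsum hμ' hμ'lim hstep
  have hlhpos : 0 < lamhat := by
    rw [hlamhat]; exact lt_min (div_pos hμ0 hL) hlam1
  have LB' : ∀ n, 1 ≤ n → lamhat ≤ lam n := by
    intro n hn; rw [hlamhat]; exact LB n hn
  have hcontr : ∀ n, N0 ≤ n →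
      ‖y n - lam n • (A (y n) - A (w n)) - p₀‖^2 ≤ τ * ‖w n - p₀‖^2 := by
    intro n hn
    have hn1 : 1 ≤ n := le_trans hN01 hn
    have hlamne : lam n ≠ 0 := ne_of_gt (lt_of_lt_of_le hlhpos (LB' n hn1))
    have huu : lam n • ((1 / lam n) • (w n - y n - lam n • A (w n)))
        = w n - y n - lam n • A (w n) := by
      rw [smul_smul, mul_one_div_cancel hlamne, one_smul]
    exact aux_contraction A r τ μ (lam n) lamhat (w n) (y n) p₀ _ hr hμ0 hμ1 hlhpos
      (LB' n hn1) (hmonoAB (y n) _ (hy n hn1)) huu (hstepN n hn) hτdef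
  set σf : ℕ → ℝ := fun n => ((1 - theta n)/theta n) * (1-β) with hσf
  set Γ : ℕ → ℝ := fun n => ‖x (n+1) - p₀‖^2 + σf n * ‖x (n+1) - x n‖^2 with hΓ
  clear_value σf Γ
  have hstepΓ : ∀ n, N0 ≤ n → Γ (n+1) ≤ qq * Γ n := by
    intro n hn
    have hn1 : 1 ≤ n := le_trans hN01 hn
    have hm1 : 1 ≤ n + 1 := by omega
    obtain ⟨hθa, hθb, hθc⟩ := hθfacts (n+1) hm1
    obtain ⟨hθa', hθb', _⟩ := hθfacts n hn1
    have ht't : theta n ≤ theta (n+1) := (hθn' n hn1).2.1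
    have hβm := hc1.1 (n+1) hm1
    have hαm := hc2.1 (n+1) hm1
    obtain ⟨hC, hD⟩ := aux_coeff_bound τ β α θ (theta (n+1)) (theta n)
      (beta (n+1)) (alpha (n+1)) hτh hτ1 hβ0 hβlt hα0 hαlt hβm.1 hβm.2 hαm.1 hαm.2
      hθ1 hθ2 hθa' ht't hθb hθc
    rw [← hqq] at hC hD
    have htpos : 0 < theta (n+1) := lt_of_lt_of_le hθpos hθa
    have htne : theta (n+1) ≠ 0 := ne_of_gt htpos
    have hzm : z (n+1) = x (n+1) + beta (n+1) • (x (n+1) - x n) := by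
      have h0 := hz (n+1) hm1; simpa using h0
    have hwm : w (n+1) = x (n+1) + alpha (n+1) • (x (n+1) - x n) := by
      have h0 := hw (n+1) hm1; simpa using h0
    have hxm : x (n+1+1) = (1 - theta (n+1)) • z (n+1)
        + theta (n+1) • (y (n+1) - lam (n+1) • (A (y (n+1)) - A (w (n+1)))) :=
      hx (n+1) hm1
    have hE1 : ‖x (n+1+1) - p₀‖^2 = (1 - theta (n+1)) * ‖z (n+1) - p₀‖^2
        + theta (n+1) * ‖y (n+1) - lam (n+1) • (A (y (n+1)) - A (w (n+1))) - p₀‖^2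
        - theta (n+1)*(1 - theta (n+1))
          * ‖z (n+1) - (y (n+1) - lam (n+1) • (A (y (n+1)) - A (w (n+1))))‖^2 := by
      rw [hxm]; exact aux_comb_sq (theta (n+1)) (z (n+1)) _ p₀
    have hE2 : ‖x (n+1+1) - z (n+1)‖^2 = (theta (n+1))^2
        * ‖z (n+1) - (y (n+1) - lam (n+1) • (A (y (n+1)) - A (w (n+1))))‖^2 := by
      have h1 : x (n+1+1) - z (n+1) = theta (n+1)
          • ((y (n+1) - lam (n+1) • (A (y (n+1)) - A (w (n+1)))) - z (n+1)) := by
        rw [hxm]; module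
      rw [h1, norm_smul, mul_pow, Real.norm_eq_abs, sq_abs,
        norm_sub_rev (y (n+1) - lam (n+1) • (A (y (n+1)) - A (w (n+1))))]
    have hE3 : ‖z (n+1) - p₀‖^2 ≤ (1 + beta (n+1)) * ‖x (n+1) - p₀‖^2
        + beta (n+1) * (1 + beta (n+1)) * ‖x (n+1) - x n‖^2 := by
      have h1 : z (n+1) = (1 - (-beta (n+1))) • x (n+1) + (-beta (n+1)) • x n := by
        rw [hzm]; module
      have h2 := aux_comb_sq (-beta (n+1)) (x (n+1)) (x n) p₀
      rw [← h1] at h2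
      linarith only [h2, mul_nonneg hβm.1 (sq_nonneg ‖x n - p₀‖)]
    have hE4 : ‖w (n+1) - p₀‖^2 ≤ (1 + alpha (n+1)) * ‖x (n+1) - p₀‖^2
        + alpha (n+1) * (1 + alpha (n+1)) * ‖x (n+1) - x n‖^2 := by
      have h1 : w (n+1) = (1 - (-alpha (n+1))) • x (n+1) + (-alpha (n+1)) • x n := by
        rw [hwm]; module
      have h2 := aux_comb_sq (-alpha (n+1)) (x (n+1)) (x n) p₀
      rw [← h1] at h2
      linarith only [h2, mul_nonneg hαm.1 (sq_nonneg ‖x n - p₀‖)]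
    have hE5 : (1-β) * ‖x (n+1+1) - x (n+1)‖^2 - β*(1-β) * ‖x (n+1) - x n‖^2
        ≤ ‖x (n+1+1) - z (n+1)‖^2 := by
      have h1 : x (n+1+1) - z (n+1)
          = (x (n+1+1) - x (n+1)) - beta (n+1) • (x (n+1) - x n) := by
        rw [hzm]; abel
      rw [h1]
      exact aux_sub_smul_bound β (beta (n+1)) hβm.1 hβm.2 (by linarith only [hβhalf]) _ _
    have hV : ‖y (n+1) - lam (n+1) • (A (y (n+1)) - A (w (n+1))) - p₀‖^2
        ≤ τ * ‖w (n+1) - p₀‖^2 := hcontr (n+1) (by omega)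
    have hs1nn : 0 ≤ (1 - theta (n+1))/theta (n+1) :=
      div_nonneg (by linarith only [hθb]) htpos.le
    have htK : theta (n+1)*(1 - theta (n+1))
          * ‖z (n+1) - (y (n+1) - lam (n+1) • (A (y (n+1)) - A (w (n+1))))‖^2
        = ((1 - theta (n+1))/theta (n+1)) * ‖x (n+1+1) - z (n+1)‖^2 := by
      rw [hE2]; field_simp
    have hP1 : ((1 - theta (n+1))/theta (n+1))
          * ((1-β) * ‖x (n+1+1) - x (n+1)‖^2 - β*(1-β) * ‖x (n+1) - x n‖^2)
        ≤ ((1 - theta (n+1))/theta (n+1)) * ‖x (n+1+1) - z (n+1)‖^2 :=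
      mul_le_mul_of_nonneg_left hE5 hs1nn
    have hP2 : theta (n+1) * ‖y (n+1) - lam (n+1) • (A (y (n+1)) - A (w (n+1))) - p₀‖^2
        ≤ theta (n+1) * (τ * ‖w (n+1) - p₀‖^2) :=
      mul_le_mul_of_nonneg_left hV htpos.le
    have hP3 : (1 - theta (n+1)) * ‖z (n+1) - p₀‖^2
        ≤ (1 - theta (n+1)) * ((1 + beta (n+1)) * ‖x (n+1) - p₀‖^2
          + beta (n+1) * (1 + beta (n+1)) * ‖x (n+1) - x n‖^2) :=
      mul_le_mul_of_nonneg_left hE3 (by linarith only [hθb])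
    have hP4 : (theta (n+1) * τ) * ‖w (n+1) - p₀‖^2
        ≤ (theta (n+1) * τ) * ((1 + alpha (n+1)) * ‖x (n+1) - p₀‖^2
          + alpha (n+1) * (1 + alpha (n+1)) * ‖x (n+1) - x n‖^2) :=
      mul_le_mul_of_nonneg_left hE4 (by positivity)
    have hP5 : ((1 - theta (n+1))*(1 + beta (n+1))
          + theta (n+1)*τ*(1 + alpha (n+1))) * ‖x (n+1) - p₀‖^2
        ≤ qq * ‖x (n+1) - p₀‖^2 :=
      mul_le_mul_of_nonneg_right hC (sq_nonneg _)
    have hP6 : ((1 - theta (n+1))*(beta (n+1))*(1 + beta (n+1))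
          + theta (n+1)*τ*(alpha (n+1))*(1 + alpha (n+1))
          + ((1 - theta (n+1))/theta (n+1))*β*(1-β)) * ‖x (n+1) - x n‖^2
        ≤ (qq * (((1 - theta n)/theta n)*(1-β))) * ‖x (n+1) - x n‖^2 :=
      mul_le_mul_of_nonneg_right hD (sq_nonneg _)
    simp only [hΓ, hσf]
    have hstage1 : ‖x (n+1+1) - p₀‖^2
          + ((1 - theta (n+1))/theta (n+1)) * (1-β) * ‖x (n+1+1) - x (n+1)‖^2
        ≤ (1 - theta (n+1)) * ‖z (n+1) - p₀‖^2
          + theta (n+1) * (τ * ‖w (n+1) - p₀‖^2)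
          + ((1 - theta (n+1))/theta (n+1)) * β * (1-β) * ‖x (n+1) - x n‖^2 := by
      linarith only [hE1, htK, hP1, hP2]
    have hstage2 : (1 - theta (n+1)) * ‖z (n+1) - p₀‖^2
          + theta (n+1) * (τ * ‖w (n+1) - p₀‖^2)
          + ((1 - theta (n+1))/theta (n+1)) * β * (1-β) * ‖x (n+1) - x n‖^2
        ≤ ((1 - theta (n+1))*(1 + beta (n+1))
            + theta (n+1)*τ*(1 + alpha (n+1))) * ‖x (n+1) - p₀‖^2
          + ((1 - theta (n+1))*(beta (n+1))*(1 + beta (n+1))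
            + theta (n+1)*τ*(alpha (n+1))*(1 + alpha (n+1))
            + ((1 - theta (n+1))/theta (n+1))*β*(1-β)) * ‖x (n+1) - x n‖^2 := by
      linarith only [hP3, hP4]
    have hstage3 : ((1 - theta (n+1))*(1 + beta (n+1))
            + theta (n+1)*τ*(1 + alpha (n+1))) * ‖x (n+1) - p₀‖^2
          + ((1 - theta (n+1))*(beta (n+1))*(1 + beta (n+1))
            + theta (n+1)*τ*(alpha (n+1))*(1 + alpha (n+1))
            + ((1 - theta (n+1))/theta (n+1))*β*(1-β)) * ‖x (n+1) - x n‖^2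
        ≤ qq * (‖x (n+1) - p₀‖^2
            + ((1 - theta n)/theta n) * (1-β) * ‖x (n+1) - x n‖^2) := by
      have hexp : qq * (‖x (n+1) - p₀‖^2
            + ((1 - theta n)/theta n) * (1-β) * ‖x (n+1) - x n‖^2)
          = qq * ‖x (n+1) - p₀‖^2
            + (qq * (((1 - theta n)/theta n)*(1-β))) * ‖x (n+1) - x n‖^2 := by ring
      rw [hexp]
      linarith only [hP5, hP6]
    linarith only [hstage1, hstage2, hstage3]
  have hΓind : ∀ n, N0 ≤ n → Γ n ≤ qq^(n - N0) * Γ N0 := by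
    intro n hn
    induction n, hn using Nat.le_induction with
    | base => simp
    | succ n hn ih =>
      have h1 := hstepΓ n hn
      have h3 : n + 1 - N0 = (n - N0) + 1 := by omega
      rw [h3, pow_succ]
      calc Γ (n+1) ≤ qq * Γ n := h1
        _ ≤ qq * (qq^(n-N0) * Γ N0) := mul_le_mul_of_nonneg_left ih hq0.le
        _ = qq^(n-N0) * qq * Γ N0 := by ring
  refine ⟨N0, hN01, ?_⟩
  intro n hn
  have hn1 : 1 ≤ n := le_trans hN01 hn
  have hσnn : 0 ≤ σf n := by
    obtain ⟨h1, h2, _⟩ := hθfacts n hn1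
    have h3 : 0 < theta n := lt_of_lt_of_le hθpos h1
    simp only [hσf]
    exact mul_nonneg (div_nonneg (by linarith) h3.le) (by linarith)
  have h2 := hΓind n hn
  have h3 : ‖x (n+1) - p₀‖^2 ≤ Γ n := by
    simp only [hΓ]
    nlinarith [mul_nonneg hσnn (sq_nonneg ‖x (n+1) - x n‖)]
  calc ‖x (n+1) - p₀‖^2 ≤ Γ n := h3
    _ ≤ qq^(n - N0) * Γ N0 := h2
    _ = qq^(n - N0) * (‖x (N0+1) - p₀‖^2
        + ((1 - theta N0)/theta N0) * (1-β) * ‖x (N0+1) - x N0‖^2) := by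
      simp only [hΓ, hσf]
end
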